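/- arXiv:0806.3784 — 8 statements merged into one kernel-verified Lean document; each statement's English description precedes it below -/
import Mathlib

section
/- If f ∈ ℝ[X₁,…,Xₙ] is SOS-convex and there exists u ∈ ℝⁿ with f(u) = 0 and ∇f(u) = 0, then f is an SOS polynomial. -/
open MvPolynomial Matrix

/-- A polynomial is SOS if it is a finite sum of squares of polynomials. -/
def IsSOS {n : ℕ} (p : MvPolynomial (Fin n) ℝ) : Prop :=
  ∃ (k : ℕ) (q : Fin k → MvPolynomial (Fin n) ℝ), p = ∑ i, q i ^ 2

/-- A polynomial `f` is SOS-convex if its Hessian of formal second partial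
derivatives factors as `L·Lᵀ` for some polynomial matrix `L`. -/
def IsSOSConvex {n : ℕ} (f : MvPolynomial (Fin n) ℝ) : Prop :=
  ∃ (s : ℕ) (L : Matrix (Fin n) (Fin s) (MvPolynomial (Fin n) ℝ)),
    (Matrix.of fun i j => pderiv i (pderiv j f)) = L * Lᵀ

section Aux
open Polynomial

/-! ### The moment functional and moment matrix -/

noncomputable def psi (m : ℕ) : ℝ := ((m + 1 : ℝ) * (m + 2))⁻¹

lemma psi_mul_cancel (m : ℕ) : psi m * (((m:ℝ)+2) * ((m:ℝ)+1)) = 1 := by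
  have hp : ((m:ℝ)+1) * ((m:ℝ)+2) ≠ 0 := by positivity
  rw [psi, show ((m:ℝ)+2)*((m:ℝ)+1) = ((m:ℝ)+1)*((m:ℝ)+2) by ring]
  exact inv_mul_cancel₀ hp

open Polynomial intervalIntegral in
lemma psi_eq_integral (m : ℕ) : psi m = ∫ t in (0:ℝ)..1, (1 - t) * t ^ m := by
  have h : ∀ t : ℝ, (1 - t) * t ^ m = t ^ m - t ^ (m + 1) := by intro t; ring
  simp only [h]
  rw [intervalIntegral.integral_sub (intervalIntegral.intervalIntegrable_pow m)
    (intervalIntegral.intervalIntegrable_pow (m+1)), integral_pow, integral_pow]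
  rw [zero_pow (by omega : m + 1 ≠ 0), zero_pow (by omega : m + 1 + 1 ≠ 0)]
  simp only [psi, one_pow]
  push_cast
  have h1 : (m + 1 : ℝ) ≠ 0 := by positivity
  rw [show ((m:ℝ) + 1 + 1) = (m:ℝ) + 2 by ring]
  have h4 : (m + 2 : ℝ) ≠ 0 := by positivity
  rw [div_sub_div _ _ h1 h4, show ((1:ℝ)-0)*(↑m+2) - (↑m+1)*((1:ℝ)-0) = 1 by ring, one_div]

lemma momentMatrix_posSemidef (d : ℕ) :
    (Matrix.of fun k l : Fin d => psi (k + l)).PosSemidef := by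
  rw [Matrix.posSemidef_iff_dotProduct_mulVec]
  constructor
  · ext k l
    simp [Matrix.conjTranspose_apply, Matrix.of_apply, add_comm]
  · intro x
    have pointwise : ∀ t : ℝ, ∑ k : Fin d, x k * ∑ l : Fin d, x l * ((1-t) * t^((k:ℕ)+(l:ℕ)))
        = (1-t) * (∑ k : Fin d, x k * t^(k:ℕ))^2 := by
      intro t
      rw [sq, Finset.sum_mul_sum, Finset.mul_sum]
      refine Finset.sum_congr rfl fun k _ => ?_
      rw [Finset.mul_sum, Finset.mul_sum]
      refine Finset.sum_congr rfl fun l _ => ?_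
      rw [pow_add]; ring
    have inner : ∀ k : Fin d, (∫ t in (0:ℝ)..1, x k * ∑ l : Fin d, x l * ((1-t)*t^((k:ℕ)+(l:ℕ))))
        = x k * ∑ l : Fin d, psi ((k:ℕ)+(l:ℕ)) * x l := by
      intro k
      rw [intervalIntegral.integral_const_mul]
      congr 1
      have hs := intervalIntegral.integral_finset_sum (μ := MeasureTheory.volume)
        (a := (0:ℝ)) (b := 1) (s := (Finset.univ : Finset (Fin d)))
        (f := fun l t => x l * ((1-t)*t^((k:ℕ)+(l:ℕ))))
        (fun l _ => by apply Continuous.intervalIntegrable; continuity)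
      rw [hs]
      refine Finset.sum_congr rfl fun l _ => ?_
      rw [intervalIntegral.integral_const_mul, ← psi_eq_integral]; ring
    have outer := intervalIntegral.integral_finset_sum (μ := MeasureTheory.volume)
      (a := (0:ℝ)) (b := 1) (s := (Finset.univ : Finset (Fin d)))
      (f := fun (k : Fin d) t => x k * ∑ l : Fin d, x l * ((1-t)*t^((k:ℕ)+(l:ℕ))))
      (fun k _ => by
        apply Continuous.intervalIntegrable
        apply Continuous.mul continuous_const
        apply continuous_finset_sum
        intro l _
        continuity)
    have key : dotProduct (star x) ((Matrix.of fun k l : Fin d => psi (k + l)) *ᵥ x)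
        = ∫ t in (0:ℝ)..1, (1 - t) * (∑ k : Fin d, x k * t ^ (k:ℕ)) ^ 2 := by
      simp only [dotProduct, Matrix.mulVec, dotProduct, Matrix.of_apply, star_trivial]
      calc ∑ k : Fin d, x k * ∑ l : Fin d, psi ((k:ℕ)+(l:ℕ)) * x l
          = ∑ k : Fin d, ∫ t in (0:ℝ)..1, x k * ∑ l : Fin d, x l * ((1-t)*t^((k:ℕ)+(l:ℕ))) :=
            (Finset.sum_congr rfl fun k _ => (inner k).symm)
        _ = ∫ t in (0:ℝ)..1, ∑ k : Fin d, x k * ∑ l : Fin d, x l * ((1-t)*t^((k:ℕ)+(l:ℕ))) :=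
            outer.symm
        _ = ∫ t in (0:ℝ)..1, (1-t) * (∑ k : Fin d, x k * t^(k:ℕ))^2 := by
            simp only [pointwise]
    rw [key]
    apply intervalIntegral.integral_nonneg (by norm_num)
    intro t ht
    have : 0 ≤ 1 - t := by linarith [ht.2]
    positivity

/-! ### The functional `Ψ` on polynomials, `Ψ(tᵐ) = 1/((m+1)(m+2))` -/

open Polynomial

variable {n : ℕ}

noncomputable def PsiF (n : ℕ) : Polynomial (MvPolynomial (Fin n) ℝ) →+ MvPolynomial (Fin n) ℝ where
  toFun p := p.sum fun m a => psi m • a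
  map_zero' := Polynomial.sum_zero_index _
  map_add' p q := Polynomial.sum_add_index p q _ (fun _ => smul_zero _) (fun m a b => smul_add _ a b)

lemma PsiF_monomial (m : ℕ) (a : MvPolynomial (Fin n) ℝ) :
    PsiF n (Polynomial.monomial m a) = psi m • a :=
  Polynomial.sum_monomial_index a _ (smul_zero _)

lemma PsiF_dd (p : Polynomial (MvPolynomial (Fin n) ℝ)) :
    PsiF n (derivative (derivative p)) = p.eval 1 - p.coeff 0 - p.coeff 1 := by
  induction p using Polynomial.induction_on' with
  | add p q hp hq =>
      simp only [map_add, hp, hq, Polynomial.eval_add, Polynomial.coeff_add]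
      ring
  | monomial m a =>
      match m with
      | 0 =>
          simp [Polynomial.derivative_monomial, Polynomial.eval_monomial,
            Polynomial.coeff_monomial]
      | 1 =>
          simp [Polynomial.derivative_monomial, Polynomial.eval_monomial,
            Polynomial.coeff_monomial]
      | (m+2) =>
          rw [Polynomial.derivative_monomial, Polynomial.derivative_monomial,
            show ((m:ℕ)+2-1) = m+1 by omega, show ((m:ℕ)+1-1) = m by omega]
          simp only [PsiF_monomial, Polynomial.eval_monomial, Polynomial.coeff_monomial,
            one_pow, mul_one]
          rw [if_neg (by omega : ¬ (m+2 = 0)), if_neg (by omega : ¬ (m+2 = 1)),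
            sub_zero, sub_zero]
          have hc : ∀ k : ℕ, ((k : ℕ) : MvPolynomial (Fin n) ℝ) = MvPolynomial.C (k : ℝ) :=
            fun k => (MvPolynomial.C_eq_coe_nat k).symm
          rw [MvPolynomial.smul_eq_C_mul, hc (m+2), hc (m+1),
            show (((m+2:ℕ)):ℝ) = (m:ℝ)+2 by push_cast; ring,
            show (((m+1:ℕ)):ℝ) = (m:ℝ)+1 by push_cast; ring]
          calc MvPolynomial.C (psi m) * (a * MvPolynomial.C ((m:ℝ)+2) * MvPolynomial.C ((m:ℝ)+1))
              = (MvPolynomial.C (psi m) * (MvPolynomial.C ((m:ℝ)+2) * MvPolynomial.C ((m:ℝ)+1))) * a := by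
                ring
            _ = MvPolynomial.C (psi m * (((m:ℝ)+2)*((m:ℝ)+1))) * a := by
                rw [MvPolynomial.C_mul, MvPolynomial.C_mul]
            _ = a := by rw [psi_mul_cancel]; simp

lemma PsiF_sq (d : ℕ) (a : Fin d → MvPolynomial (Fin n) ℝ) (B : Matrix (Fin d) (Fin d) ℝ)
    (hB : ∀ k l : Fin d, psi ((k:ℕ)+(l:ℕ)) = ∑ m : Fin d, B m k * B m l) :
    PsiF n ((∑ k : Fin d, Polynomial.C (a k) * Polynomial.X ^ (k:ℕ))^2)
      = ∑ m : Fin d, (∑ k : Fin d, B m k • a k)^2 := by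
  rw [sq, Finset.sum_mul_sum, map_sum]
  have step : ∀ k l : Fin d,
      PsiF n (Polynomial.C (a k) * Polynomial.X ^ (k:ℕ) * (Polynomial.C (a l) * Polynomial.X ^ (l:ℕ)))
        = psi ((k:ℕ)+(l:ℕ)) • (a k * a l) := by
    intro k l
    rw [Polynomial.C_mul_X_pow_eq_monomial, Polynomial.C_mul_X_pow_eq_monomial,
      Polynomial.monomial_mul_monomial, PsiF_monomial]
  calc ∑ k : Fin d, PsiF n (∑ l : Fin d,
          Polynomial.C (a k) * Polynomial.X ^ (k:ℕ) * (Polynomial.C (a l) * Polynomial.X ^ (l:ℕ)))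
      = ∑ k : Fin d, ∑ l : Fin d, ∑ m : Fin d, (B m k * B m l) • (a k * a l) := by
        refine Finset.sum_congr rfl fun k _ => ?_
        rw [map_sum]
        refine Finset.sum_congr rfl fun l _ => ?_
        rw [step k l, hB k l, Finset.sum_smul]
    _ = ∑ k : Fin d, ∑ m : Fin d, ∑ l : Fin d, (B m k * B m l) • (a k * a l) :=
        Finset.sum_congr rfl fun k _ => Finset.sum_comm
    _ = ∑ m : Fin d, ∑ k : Fin d, ∑ l : Fin d, (B m k * B m l) • (a k * a l) :=
        Finset.sum_comm
    _ = ∑ m : Fin d, (∑ k : Fin d, B m k • a k)^2 := by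
        refine Finset.sum_congr rfl fun m _ => ?_
        rw [sq, Finset.sum_mul_sum]
        refine Finset.sum_congr rfl fun k _ => Finset.sum_congr rfl fun l _ => ?_
        rw [smul_mul_smul_comm]

/-! ### Substitution `x ↦ u + t(x - u)` -/

noncomputable def lineSub (u : Fin n → ℝ) :
    MvPolynomial (Fin n) ℝ →ₐ[ℝ] Polynomial (MvPolynomial (Fin n) ℝ) :=
  MvPolynomial.aeval fun i =>
    Polynomial.C (X i - MvPolynomial.C (u i)) * Polynomial.X + Polynomial.C (MvPolynomial.C (u i))

lemma lineSub_X (u : Fin n → ℝ) (i : Fin n) :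
    lineSub u (X i) = Polynomial.C (X i - MvPolynomial.C (u i)) * Polynomial.X
      + Polynomial.C (MvPolynomial.C (u i)) :=
  MvPolynomial.aeval_X _ i

lemma lineSub_C (u : Fin n → ℝ) (r : ℝ) :
    lineSub u (MvPolynomial.C r) = Polynomial.C (MvPolynomial.C r) := by
  simp [lineSub, MvPolynomial.algebraMap_eq, Polynomial.algebraMap_apply]

lemma derivative_lineSub (u : Fin n → ℝ) (f : MvPolynomial (Fin n) ℝ) :
    derivative (lineSub u f)
      = ∑ i : Fin n, Polynomial.C (X i - MvPolynomial.C (u i)) * lineSub u (pderiv i f) := by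
  induction f using MvPolynomial.induction_on with
  | C a => simp [lineSub_C, pderiv_C]
  | add p q hp hq =>
      simp only [map_add, derivative_add, hp, hq, mul_add, Finset.sum_add_distrib]
  | mul_X p i hp =>
      have hXi : derivative (lineSub u (X i)) = Polynomial.C (X i - MvPolynomial.C (u i)) := by
        rw [lineSub_X]; simp
      have key : ∀ j : Fin n,
          Polynomial.C (X j - MvPolynomial.C (u j)) * lineSub u (pderiv j (p * X i))
            = Polynomial.C (X j - MvPolynomial.C (u j)) * lineSub u (pderiv j p) * lineSub u (X i)
              + (if j = i then Polynomial.C (X i - MvPolynomial.C (u i)) * lineSub u p else 0) := by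
        intro j
        rw [pderiv_mul, map_add, _root_.map_mul, _root_.map_mul, mul_add]
        congr 1
        · ring
        · rw [pderiv_X]
          by_cases h : j = i
          · subst h; simp [Pi.single_eq_same]
          · simp [Pi.single_eq_of_ne (Ne.symm h), h]
      rw [_root_.map_mul, derivative_mul, hp, hXi]
      rw [Finset.sum_congr rfl (fun j _ => key j), Finset.sum_add_distrib,
        Finset.sum_ite_eq' Finset.univ i
          (fun _ => Polynomial.C (X i - MvPolynomial.C (u i)) * lineSub u p)]
      simp only [Finset.mem_univ, if_true, Finset.sum_mul]
      ring

lemma lineSub_eval_one (u : Fin n → ℝ) (f : MvPolynomial (Fin n) ℝ) :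
    (lineSub u f).eval 1 = f := by
  have h : (Polynomial.evalRingHom (1 : MvPolynomial (Fin n) ℝ)).comp (lineSub u).toRingHom
      = RingHom.id _ := by
    apply MvPolynomial.ringHom_ext
    · intro r; simp [lineSub_C]
    · intro i; simp [lineSub_X]
  have := RingHom.congr_fun h f
  simpa using this

lemma lineSub_coeff_zero (u : Fin n → ℝ) (f : MvPolynomial (Fin n) ℝ) :
    (lineSub u f).coeff 0 = MvPolynomial.C (eval u f) := by
  have h : (Polynomial.constantCoeff (R := MvPolynomial (Fin n) ℝ)).comp (lineSub u).toRingHom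
      = (MvPolynomial.C (σ := Fin n) (R := ℝ)).comp (MvPolynomial.eval u) := by
    apply MvPolynomial.ringHom_ext
    · intro r; simp [lineSub_C]
    · intro i; simp [lineSub_X]
  have := RingHom.congr_fun h f
  simpa [Polynomial.constantCoeff_apply] using this

lemma isSOS_of_sum_sq {ι : Type} [Fintype ι] (q : ι → MvPolynomial (Fin n) ℝ) :
    IsSOS (∑ i, q i ^ 2) :=
  ⟨Fintype.card ι, fun i => q ((Fintype.equivFin ι).symm i),
    (Equiv.sum_comp (Fintype.equivFin ι).symm (fun i => q i ^ 2)).symm⟩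

end Aux

open Polynomial in
/-- if `f` is SOS-convex and `f(u) = 0`, `∇f(u) = 0` for some `u`,
then `f` is SOS. -/
theorem stmt_1 (n : ℕ) (f : MvPolynomial (Fin n) ℝ)
    (hf : IsSOSConvex f) (u : Fin n → ℝ)
    (hfu : eval u f = 0) (hgrad : ∀ i, eval u (pderiv i f) = 0) :
    IsSOS f := by
  classical
  obtain ⟨S, L, hL⟩ := hf
  set g := lineSub u f with hg
  have hHess : ∀ i j : Fin n, pderiv i (pderiv j f) = ∑ s : Fin S, L i s * L j s := by
    intro i j
    have h := congrFun (congrFun hL i) j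
    simpa [Matrix.mul_apply, Matrix.transpose_apply, Matrix.of_apply] using h
  set P : Fin S → Polynomial (MvPolynomial (Fin n) ℝ) :=
    fun s => ∑ i : Fin n, Polynomial.C (X i - MvPolynomial.C (u i)) * lineSub u (L i s)
    with hPdef
  have hdd : derivative (derivative g) = ∑ s : Fin S, P s ^ 2 := by
    rw [hg, derivative_lineSub, Polynomial.derivative_sum]
    calc ∑ i : Fin n,
            derivative (Polynomial.C (X i - MvPolynomial.C (u i)) * lineSub u (pderiv i f))
        = ∑ i : Fin n, ∑ j : Fin n, ∑ s : Fin S,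
            (Polynomial.C (X i - MvPolynomial.C (u i)) * lineSub u (L i s))
              * (Polynomial.C (X j - MvPolynomial.C (u j)) * lineSub u (L j s)) := by
          refine Finset.sum_congr rfl fun i _ => ?_
          rw [Polynomial.derivative_C_mul, derivative_lineSub, Finset.mul_sum]
          refine Finset.sum_congr rfl fun j _ => ?_
          rw [hHess j i, map_sum, Finset.mul_sum, Finset.mul_sum]
          refine Finset.sum_congr rfl fun s _ => ?_
          rw [_root_.map_mul]; ring
      _ = ∑ i : Fin n, ∑ s : Fin S, ∑ j : Fin n,
            (Polynomial.C (X i - MvPolynomial.C (u i)) * lineSub u (L i s))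
              * (Polynomial.C (X j - MvPolynomial.C (u j)) * lineSub u (L j s)) :=
          Finset.sum_congr rfl fun i _ => Finset.sum_comm
      _ = ∑ s : Fin S, ∑ i : Fin n, ∑ j : Fin n,
            (Polynomial.C (X i - MvPolynomial.C (u i)) * lineSub u (L i s))
              * (Polynomial.C (X j - MvPolynomial.C (u j)) * lineSub u (L j s)) :=
          Finset.sum_comm
      _ = ∑ s : Fin S, P s ^ 2 := by
          refine Finset.sum_congr rfl fun s _ => ?_
          rw [hPdef, sq, Finset.sum_mul_sum]
  have hcoeff0 : g.coeff 0 = 0 := by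
    rw [hg, lineSub_coeff_zero, hfu, map_zero]
  have hcoeff1 : g.coeff 1 = 0 := by
    have h1 : g.coeff 1 = (derivative g).coeff 0 := by
      simp [Polynomial.coeff_derivative]
    rw [h1, hg, derivative_lineSub, Polynomial.finset_sum_coeff]
    refine Finset.sum_eq_zero fun i _ => ?_
    rw [Polynomial.coeff_C_mul, lineSub_coeff_zero, hgrad i, map_zero, mul_zero]
  have hf_eq : f = ∑ s : Fin S, PsiF n (P s ^ 2) := by
    rw [← map_sum, ← hdd, PsiF_dd, lineSub_eval_one, hcoeff0, hcoeff1, sub_zero, sub_zero]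
  set d := (∑ s : Fin S, (P s).natDegree) + 1 with hd
  have hdeg : ∀ s, (P s).natDegree < d := fun s =>
    Nat.lt_succ_of_le (Finset.single_le_sum (f := fun s => (P s).natDegree)
      (fun _ _ => Nat.zero_le _) (Finset.mem_univ s))
  have hP : ∀ s, P s = ∑ k : Fin d, Polynomial.C ((P s).coeff k) * Polynomial.X ^ (k:ℕ) := by
    intro s
    conv_lhs => rw [(P s).as_sum_range' d (hdeg s)]
    rw [← Fin.sum_univ_eq_sum_range (fun k => Polynomial.monomial k ((P s).coeff k)) d]
    exact Finset.sum_congr rfl fun k _ => (Polynomial.C_mul_X_pow_eq_monomial).symm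
  obtain ⟨B, hBfact⟩ : ∃ B : Matrix (Fin d) (Fin d) ℝ,
      (Matrix.of fun k l : Fin d => psi ((k:ℕ) + (l:ℕ))) = star B * B := by
    open scoped MatrixOrder in
    exact CStarAlgebra.nonneg_iff_eq_star_mul_self.mp (momentMatrix_posSemidef d).nonneg
  have hB : ∀ k l : Fin d, psi ((k:ℕ)+(l:ℕ)) = ∑ m : Fin d, B m k * B m l := by
    intro k l
    have h := congrFun (congrFun hBfact k) l
    simpa [Matrix.mul_apply, Matrix.conjTranspose_apply, Matrix.of_apply] using h
  have hsq : ∀ s, PsiF n (P s ^ 2)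
      = ∑ m : Fin d, (∑ k : Fin d, B m k • (P s).coeff k)^2 := by
    intro s
    conv_lhs => rw [hP s]
    exact PsiF_sq d (fun k => (P s).coeff k) B hB
  have hfinal : f = ∑ sm : Fin S × Fin d, (∑ k : Fin d, B sm.2 k • (P sm.1).coeff k)^2 := by
    rw [hf_eq, Fintype.sum_prod_type]
    exact Finset.sum_congr rfl fun s _ => hsq s
  rw [hfinal]
  exact isSOS_of_sum_sq _
end

section
/- Let P be a symmetric r×r matrix with entries in ℝ[X₁,…,Xₙ] that is an SOS matrix polynomial, and let u ∈ ℝⁿ be fixed. Then there exists a symmetric SOS matrix polynomial F with entries in ℝ[X₁,…,Xₙ] such that F(x) = ∫₀¹∫₀ᵗ P(u + s(x − u)) ds dt for every x ∈ ℝⁿ. -/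
open MvPolynomial Matrix

/-- A symmetric polynomial matrix `P` is an SOS matrix polynomial if `P = L·Lᵀ`
for some polynomial matrix `L`. -/
def IsSOSMatrix {n r : ℕ} (P : Matrix (Fin r) (Fin r) (MvPolynomial (Fin n) ℝ)) : Prop :=
  ∃ (s : ℕ) (L : Matrix (Fin r) (Fin s) (MvPolynomial (Fin n) ℝ)), P = L * Lᵀ

open intervalIntegral

noncomputable def subA (n : ℕ) (u : Fin n → ℝ) :
    MvPolynomial (Fin n) ℝ →ₐ[ℝ] Polynomial (MvPolynomial (Fin n) ℝ) :=
  aeval (fun k => Polynomial.C (MvPolynomial.C (u k)) +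
    Polynomial.X * Polynomial.C (MvPolynomial.X k - MvPolynomial.C (u k)))

lemma key_sub (n : ℕ) (u x : Fin n → ℝ) (s : ℝ) (p : MvPolynomial (Fin n) ℝ) :
    MvPolynomial.eval (fun k => u k + s * (x k - u k)) p
      = Polynomial.eval s (Polynomial.map (MvPolynomial.eval x) (subA n u p)) := by
  induction p using MvPolynomial.induction_on with
  | C a => simp [subA]
  | add p q hp hq => simp [_root_.map_add, hp, hq]
  | mul_X p k hp => simp [subA, _root_.map_mul, hp, mul_comm]

noncomputable def cval (m : ℕ) : ℝ := 1/(((m:ℝ)+1)*((m:ℝ)+2))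

lemma int_pow (m : ℕ) (t : ℝ) : ∫ s in (0:ℝ)..t, s^m = t^(m+1)/((m:ℝ)+1) := by
  rw [integral_pow]; simp

lemma int_one_sub_pow (m : ℕ) :
    ∫ s in (0:ℝ)..1, (1-s)*s^m = cval m := by
  have h : ∀ s : ℝ, (1-s)*s^m = s^m - s^(m+1) := by intro s; ring
  simp_rw [h]
  rw [integral_sub (by apply Continuous.intervalIntegrable; continuity)
    (by apply Continuous.intervalIntegrable; continuity), integral_pow, integral_pow]
  have h1 : (m:ℝ)+1 ≠ 0 := by positivity
  rw [zero_pow (Nat.succ_ne_zero m), zero_pow (Nat.succ_ne_zero (m+1)), sub_zero, sub_zero,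
    div_sub_div _ _ h1 (by push_cast; exact by positivity)]
  push_cast
  rw [one_pow, one_pow, show (1:ℝ)*((m:ℝ)+1+1) - ((m:ℝ)+1)*1 = 1 from by ring, one_div]
  unfold cval
  norm_num
  exact Or.inl (by ring)

lemma int_pow_succ_div (m : ℕ) :
    ∫ t in (0:ℝ)..1, t^(m+1)/((m:ℝ)+1) = cval m := by
  rw [integral_div, integral_pow]
  have h1 : (m:ℝ)+1 ≠ 0 := by positivity
  have h2 : (m:ℝ)+2 ≠ 0 := by positivity
  rw [zero_pow (Nat.succ_ne_zero (m+1))]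
  unfold cval
  push_cast
  field_simp
  ring

lemma mom_fact (D : ℕ) : ∃ B : Matrix (Fin D) (Fin D) ℝ,
    ∀ k l : Fin D, cval (k.1 + l.1) = ∑ q : Fin D, B q k * B q l := by
  have hps : PosSemidef (Matrix.of fun k l : Fin D => cval (k.1 + l.1)) := by
    rw [posSemidef_iff_dotProduct_mulVec]
    constructor
    · ext k l
      simp only [conjTranspose_apply, Matrix.of_apply, star_trivial]
      rw [Nat.add_comm]
    · intro v
      have hrepr : star v ⬝ᵥ (Matrix.of fun k l : Fin D => cval (k.1 + l.1)) *ᵥ v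
          = ∫ s in (0:ℝ)..1, (1-s) * (∑ k : Fin D, v k * s^(k.1))^2 := by
        have hint : ∀ s : ℝ, (1-s) * (∑ k : Fin D, v k * s^(k.1))^2
            = ∑ k : Fin D, ∑ l : Fin D, (v k * v l) * ((1-s) * s^(k.1+l.1)) := by
          intro s
          rw [sq, Finset.sum_mul_sum]
          rw [Finset.mul_sum]
          congr 1; ext k
          rw [Finset.mul_sum]
          congr 1; ext l
          ring
        simp_rw [hint]
        rw [integral_finset_sum]
        · have : ∀ k : Fin D, ∫ s in (0:ℝ)..1,
              ∑ l : Fin D, (v k * v l) * ((1-s) * s^(k.1+l.1))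
              = ∑ l : Fin D, (v k * v l) * cval (k.1+l.1) := by
            intro k
            rw [integral_finset_sum]
            · congr 1; ext l
              rw [intervalIntegral.integral_const_mul, int_one_sub_pow]
            · intro l _
              apply Continuous.intervalIntegrable
              continuity
          simp_rw [this]
          simp only [dotProduct, Matrix.mulVec, Matrix.of_apply, star_trivial, Finset.mul_sum]
          congr 1; ext k; congr 1; ext l; ring
        · intro k _
          apply Continuous.intervalIntegrable
          continuity
      rw [hrepr]
      apply intervalIntegral.integral_nonneg zero_le_one
      intro s hs
      exact mul_nonneg (by linarith [hs.2]) (sq_nonneg _)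
  open scoped MatrixOrder in
  obtain ⟨B, hB⟩ := CStarAlgebra.nonneg_iff_eq_star_mul_self.mp hps.nonneg
  refine ⟨B, fun k l => ?_⟩
  have := congrFun (congrFun hB k) l
  simpa [Matrix.mul_apply, Matrix.conjTranspose_apply] using this


set_option maxHeartbeats 1000000 in
/-- if `P` is a symmetric SOS matrix polynomial and `u ∈ ℝⁿ`, then there
is a symmetric SOS matrix polynomial `F` with
`F(x) = ∫₀¹∫₀ᵗ P(u + s(x − u)) ds dt` (entrywise) for every `x`. -/
theorem stmt_2 (n r : ℕ) (P : Matrix (Fin r) (Fin r) (MvPolynomial (Fin n) ℝ))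
    (hsymm : P.IsSymm) (hP : IsSOSMatrix P) (u : Fin n → ℝ) :
    ∃ F : Matrix (Fin r) (Fin r) (MvPolynomial (Fin n) ℝ),
      F.IsSymm ∧ IsSOSMatrix F ∧
      ∀ (x : Fin n → ℝ) (i j : Fin r),
        eval x (F i j) =
          ∫ t in (0:ℝ)..(1:ℝ), ∫ s in (0:ℝ)..t,
            eval (fun k => u k + s * (x k - u k)) (P i j) := by
  obtain ⟨m, L, hL⟩ := hP
  set A := subA n u with hA
  set d : ℕ := (Finset.univ : Finset (Fin r × Fin m)).sup
      (fun p => (A (L p.1 p.2)).natDegree) with hd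
  set D := d + 1 with hD
  obtain ⟨B, hB⟩ := mom_fact D
  set Lk : Fin D → Matrix (Fin r) (Fin m) (MvPolynomial (Fin n) ℝ) :=
    fun k => Matrix.of fun i j => (A (L i j)).coeff k.1 with hLk
  set N : Matrix (Fin r) (Fin D × Fin m) (MvPolynomial (Fin n) ℝ) :=
    Matrix.of fun i p => ∑ k : Fin D, MvPolynomial.C (B p.1 k) * Lk k i p.2 with hN
  set e : Fin D × Fin m ≃ Fin (D * m) := finProdFinEquiv with he
  set N' : Matrix (Fin r) (Fin (D * m)) (MvPolynomial (Fin n) ℝ) :=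
    N.submatrix id e.symm with hN'
  refine ⟨N' * N'ᵀ, ?_, ⟨D * m, N', rfl⟩, ?_⟩
  · show (N' * N'ᵀ)ᵀ = N' * N'ᵀ
    rw [transpose_mul, transpose_transpose]
  intro x i j
  set a : Fin D → Fin m → ℝ := fun k j' => MvPolynomial.eval x (Lk k i j') with ha
  set b : Fin D → Fin m → ℝ := fun k j' => MvPolynomial.eval x (Lk k j j') with hb
  -- degree bound
  have hdeg : ∀ (i0 : Fin r) (j0 : Fin m),
      ((A (L i0 j0)).map (MvPolynomial.eval x)).natDegree < D := by
    intro i0 j0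
    have h1 : ((A (L i0 j0)).map (MvPolynomial.eval x)).natDegree ≤ (A (L i0 j0)).natDegree :=
      Polynomial.natDegree_map_le
    have h2 : (A (L i0 j0)).natDegree ≤ d := by
      rw [hd]
      have h := Finset.le_sup (f := fun p : Fin r × Fin m =>
        (A (L p.1 p.2)).natDegree) (Finset.mem_univ (i0, j0))
      simpa using h
    rw [hD]
    omega
  have hLeval : ∀ (i0 : Fin r) (j0 : Fin m) (s : ℝ),
      MvPolynomial.eval (fun k => u k + s * (x k - u k)) (L i0 j0)
        = ∑ k : Fin D, MvPolynomial.eval x (Lk k i0 j0) * s^(k.1) := by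
    intro i0 j0 s
    rw [key_sub, Polynomial.eval_eq_sum_range' (hdeg i0 j0), ← Fin.sum_univ_eq_sum_range]
    apply Finset.sum_congr rfl
    intro k _
    rw [Polynomial.coeff_map]
    rfl
  have hyP : ∀ s : ℝ,
      MvPolynomial.eval (fun k => u k + s * (x k - u k)) (P i j)
        = ∑ j' : Fin m, ∑ k : Fin D, ∑ l : Fin D, (a k j' * b l j') * s^(k.1+l.1) := by
    intro s
    rw [hL, Matrix.mul_apply, map_sum]
    apply Finset.sum_congr rfl
    intro j' _
    rw [Matrix.transpose_apply, _root_.map_mul, hLeval, hLeval, Finset.sum_mul_sum]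
    apply Finset.sum_congr rfl
    intro k _
    apply Finset.sum_congr rfl
    intro l _
    rw [pow_add]; ring
  have inner : ∀ t : ℝ,
      (∫ s in (0:ℝ)..t, MvPolynomial.eval (fun k => u k + s * (x k - u k)) (P i j))
        = ∑ j' : Fin m, ∑ k : Fin D, ∑ l : Fin D,
            (a k j' * b l j') * (t^(k.1+l.1+1)/(((k.1+l.1:ℕ):ℝ)+1)) := by
    intro t
    simp_rw [hyP]
    rw [integral_finset_sum (fun _ _ => Continuous.intervalIntegrable (by fun_prop) _ _)]
    apply Finset.sum_congr rfl
    intro j' _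
    rw [integral_finset_sum (fun _ _ => Continuous.intervalIntegrable (by fun_prop) _ _)]
    apply Finset.sum_congr rfl
    intro k _
    rw [integral_finset_sum (fun _ _ => Continuous.intervalIntegrable (by fun_prop) _ _)]
    apply Finset.sum_congr rfl
    intro l _
    rw [intervalIntegral.integral_const_mul, int_pow]
  have hRHS :
      (∫ t in (0:ℝ)..1, ∫ s in (0:ℝ)..t,
          MvPolynomial.eval (fun k => u k + s * (x k - u k)) (P i j))
        = ∑ j' : Fin m, ∑ k : Fin D, ∑ l : Fin D,
            (a k j' * b l j') * cval (k.1+l.1) := by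
    simp_rw [inner]
    rw [integral_finset_sum (fun _ _ => Continuous.intervalIntegrable (by fun_prop) _ _)]
    apply Finset.sum_congr rfl
    intro j' _
    rw [integral_finset_sum (fun _ _ => Continuous.intervalIntegrable (by fun_prop) _ _)]
    apply Finset.sum_congr rfl
    intro k _
    rw [integral_finset_sum (fun _ _ => Continuous.intervalIntegrable (by fun_prop) _ _)]
    apply Finset.sum_congr rfl
    intro l _
    rw [intervalIntegral.integral_const_mul, int_pow_succ_div]
  rw [hRHS]
  -- LHS computation
  have hNeval : ∀ (i0 : Fin r) (p : Fin D × Fin m),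
      MvPolynomial.eval x (N i0 p) = ∑ k : Fin D, B p.1 k * MvPolynomial.eval x (Lk k i0 p.2) := by
    intro i0 p
    rw [hN]
    simp only [Matrix.of_apply, map_sum, _root_.map_mul, MvPolynomial.eval_C]
  calc MvPolynomial.eval x ((N' * N'ᵀ) i j)
      = ∑ p : Fin D × Fin m, MvPolynomial.eval x (N i p) * MvPolynomial.eval x (N j p) := by
        rw [Matrix.mul_apply, map_sum,
          ← Equiv.sum_comp e.symm
            (fun p => MvPolynomial.eval x (N i p) * MvPolynomial.eval x (N j p))]
        apply Finset.sum_congr rfl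
        intro c _
        rw [_root_.map_mul]
        rfl
    _ = ∑ q : Fin D, ∑ j' : Fin m, ∑ k : Fin D, ∑ l : Fin D,
          (B q k * a k j') * (B q l * b l j') := by
        rw [Fintype.sum_prod_type]
        apply Finset.sum_congr rfl
        intro q _
        apply Finset.sum_congr rfl
        intro j' _
        rw [hNeval, hNeval, Finset.sum_mul_sum]
    _ = ∑ j' : Fin m, ∑ k : Fin D, ∑ l : Fin D,
          (a k j' * b l j') * (∑ q : Fin D, B q k * B q l) := by
        rw [Finset.sum_comm]
        apply Finset.sum_congr rfl
        intro j' _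
        rw [Finset.sum_comm]
        apply Finset.sum_congr rfl
        intro k _
        rw [Finset.sum_comm]
        apply Finset.sum_congr rfl
        intro l _
        rw [Finset.mul_sum]
        apply Finset.sum_congr rfl
        intro q _
        ring
    _ = ∑ j' : Fin m, ∑ k : Fin D, ∑ l : Fin D,
          (a k j' * b l j') * cval (k.1+l.1) := by
        apply Finset.sum_congr rfl
        intro j' _
        apply Finset.sum_congr rfl
        intro k _
        apply Finset.sum_congr rfl
        intro l _
        rw [hB]
end

section
/- Let f be a convex univariate real polynomial (i.e., f'' ≥ 0 on ℝ), let g ∈ ℝ[X₁,…,Xₙ], and set d := ⌈deg(f∘g)/2⌉. Let L be a linear functional on the space of polynomials of degree at most 2d satisfying L(1) = 1 and L(σ) ≥ 0 for every SOS polynomial σ of degree at most 2d. Then L(f∘g) ≥ f(L(g)), where f∘g ∈ ℝ[X₁,…,Xₙ] denotes the composition of f with g. -/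
open MvPolynomial

/-- A polynomial is SOS of degree at most `2d` if it is a finite sum of squares of
polynomials, each of degree at most `d`. -/
def IsSOSUpTo {n : ℕ} (d : ℕ) (p : MvPolynomial (Fin n) ℝ) : Prop :=
  ∃ (k : ℕ) (q : Fin k → MvPolynomial (Fin n) ℝ),
    (∀ i, (q i).totalDegree ≤ d) ∧ p = ∑ i, q i ^ 2

section Univariate

open Polynomial Filter

/-- Tangent line inequality for a polynomial with nonnegative second derivative. -/
lemma poly_tangent_le {f : Polynomial ℝ}
    (hconv : ∀ x : ℝ, 0 ≤ (Polynomial.derivative (Polynomial.derivative f)).eval x)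
    (a x : ℝ) :
    f.eval a + (Polynomial.derivative f).eval a * (x - a) ≤ f.eval x := by
  have hmono : Monotone fun t => (Polynomial.derivative f).eval t := by
    apply monotone_of_deriv_nonneg (Polynomial.differentiable _)
    intro t
    rw [Polynomial.deriv]
    exact hconv t
  rcases lt_trichotomy x a with h | h | h
  · obtain ⟨c, hc, hc'⟩ := exists_hasDerivAt_eq_slope (fun t => f.eval t)
      (fun t => (Polynomial.derivative f).eval t) h f.continuous.continuousOn
      (fun t _ => f.hasDerivAt t)
    rw [eq_div_iff (by intro hma; apply sub_ne_zero.mpr (ne_of_gt h); linarith : (a:ℝ) - x ≠ 0)] at hc'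
    have h1 : (Polynomial.derivative f).eval c ≤ (Polynomial.derivative f).eval a :=
      hmono hc.2.le
    nlinarith [hc.1, hc.2]
  · simp [h]
  · obtain ⟨c, hc, hc'⟩ := exists_hasDerivAt_eq_slope (fun t => f.eval t)
      (fun t => (Polynomial.derivative f).eval t) h f.continuous.continuousOn
      (fun t _ => f.hasDerivAt t)
    rw [eq_div_iff (sub_ne_zero.mpr (ne_of_gt h))] at hc'
    have h1 : (Polynomial.derivative f).eval a ≤ (Polynomial.derivative f).eval c :=
      hmono hc.1.le
    nlinarith [hc.1, hc.2]

/-- A univariate real polynomial that is nonnegative on all of `ℝ` is a finite sum of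
squares of polynomials of degree at most half its degree. -/
lemma poly_sos_of_nonneg :
    ∀ (N : ℕ) (p : Polynomial ℝ), p.natDegree ≤ N → (∀ x, 0 ≤ p.eval x) →
      ∃ (k : ℕ) (s : Fin k → Polynomial ℝ),
        (∀ i, 2 * (s i).natDegree ≤ p.natDegree) ∧ p = ∑ i, s i ^ 2 := by
  intro N
  induction N using Nat.strong_induction_on with
  | _ N ih =>
  intro p hdeg hpos
  rcases Nat.eq_zero_or_pos p.natDegree with h0 | hpos'
  · -- constant case
    obtain ⟨c, rfl⟩ := Polynomial.natDegree_eq_zero.mp h0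
    have hc : 0 ≤ c := by simpa using hpos 0
    refine ⟨1, fun _ => Polynomial.C (Real.sqrt c), by simp, ?_⟩
    rw [Fin.sum_univ_one, ← Polynomial.C_pow, Real.sq_sqrt hc]
  · -- positive degree
    have hdpos : 0 < p.degree := Polynomial.natDegree_pos_iff_degree_pos.mp hpos'
    -- p attains a global minimum
    have htop : Tendsto (fun x => p.eval x) atTop atTop := by
      refine (Polynomial.abs_tendsto_atTop (P := p) hdpos).congr fun x => ?_
      exact abs_of_nonneg (hpos x)
    have hbot : Tendsto (fun x => p.eval x) atBot atTop := by
      set P2 := p.comp (-Polynomial.X) with hP2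
      have hev : ∀ x : ℝ, P2.eval x = p.eval (-x) := by
        intro x; simp [hP2, Polynomial.eval_comp]
      have hnd2 : P2.natDegree = p.natDegree := by
        simp [hP2, Polynomial.natDegree_comp]
      have hd2 : 0 < P2.degree := by
        apply Polynomial.natDegree_pos_iff_degree_pos.mp
        omega
      have h2 : Tendsto (fun x => P2.eval x) atTop atTop := by
        refine (Polynomial.abs_tendsto_atTop (P := P2) hd2).congr fun x => ?_
        rw [hev]; exact abs_of_nonneg (hpos _)
      have h3 := h2.comp tendsto_neg_atBot_atTop
      refine h3.congr fun x => ?_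
      simp [Function.comp, hev]
    have hcc : Tendsto (fun x => p.eval x) (cocompact ℝ) atTop := by
      rw [cocompact_eq_atBot_atTop]
      exact hbot.sup htop
    obtain ⟨r, hr⟩ := p.continuous.exists_forall_le hcc
    set m := p.eval r with hm
    have hm0 : 0 ≤ m := hpos r
    set h := p - Polynomial.C m with hh
    have hh0 : ∀ x, 0 ≤ h.eval x := by
      intro x; simp only [hh, Polynomial.eval_sub, Polynomial.eval_C, sub_nonneg]; exact hr x
    have hroot : h.IsRoot r := by simp [hh, Polynomial.IsRoot, hm]
    have hder : (Polynomial.derivative h).eval r = 0 := by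
      have hmin : IsLocalMin (fun x => h.eval x) r :=
        Filter.Eventually.of_forall fun y => by
          simp only [hh, Polynomial.eval_sub, Polynomial.eval_C]
          have := hr y; linarith
      have := hmin.deriv_eq_zero
      rwa [Polynomial.deriv] at this
    obtain ⟨q₁, hq₁⟩ := Polynomial.dvd_iff_isRoot.mpr hroot
    have hq₁r : q₁.IsRoot r := by
      have heq : (Polynomial.derivative h).eval r = q₁.eval r := by
        rw [hq₁]
        simp [Polynomial.derivative_mul]
      rw [Polynomial.IsRoot, ← heq, hder]
    obtain ⟨q, hq⟩ := Polynomial.dvd_iff_isRoot.mpr hq₁r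
    have hfac : h = (Polynomial.X - Polynomial.C r) ^ 2 * q := by
      rw [hq₁, hq]; ring
    have hq0 : q ≠ 0 := by
      rintro rfl
      rw [mul_zero] at hfac
      have hpeq : p = Polynomial.C m := by
        have h2 : p - Polynomial.C m = 0 := by rw [← hh, hfac]
        linear_combination (norm := ring_nf) h2
      rw [hpeq] at hpos'
      simp at hpos'
    -- q is nonnegative
    have hqne : ∀ x, x ≠ r → 0 ≤ q.eval x := by
      intro x hx
      have h1 : 0 ≤ (x - r) ^ 2 * q.eval x := by
        have := hh0 x
        rw [hfac] at this
        simpa using this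
      have h2 : 0 < (x - r) ^ 2 :=
        lt_of_le_of_ne (sq_nonneg _) (Ne.symm (pow_ne_zero 2 (sub_ne_zero.mpr hx)))
      exact (mul_nonneg_iff_of_pos_left h2).mp h1
    have hqpos : ∀ x, 0 ≤ q.eval x := by
      intro x
      rcases eq_or_ne x r with rfl | hx
      · have hten : Filter.Tendsto (fun y => q.eval y) (nhdsWithin x {x}ᶜ)
            (nhds (q.eval x)) :=
          (q.continuous.tendsto x).mono_left nhdsWithin_le_nhds
        refine ge_of_tendsto hten ?_
        filter_upwards [self_mem_nhdsWithin] with y hy using hqne y hy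
      · exact hqne x hx
    -- degrees
    have hXr : (Polynomial.X - Polynomial.C r : Polynomial ℝ) ≠ 0 := Polynomial.X_sub_C_ne_zero r
    have hhd : h.natDegree = q.natDegree + 2 := by
      rw [hfac, Polynomial.natDegree_mul (pow_ne_zero 2 hXr) hq0]
      rw [Polynomial.natDegree_pow, Polynomial.natDegree_X_sub_C]
      ring
    have hhle : h.natDegree ≤ p.natDegree := by
      refine (Polynomial.natDegree_sub_le p (Polynomial.C m)).trans ?_
      simp [Polynomial.natDegree_C]
    have hqlt : q.natDegree < N := by omega
    obtain ⟨k, s, hs, hsum⟩ := ih q.natDegree hqlt q le_rfl hqpos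
    refine ⟨k + 1, Fin.cons (Polynomial.C (Real.sqrt m))
      (fun i => (Polynomial.X - Polynomial.C r) * s i), ?_, ?_⟩
    · intro i
      refine Fin.cases ?_ (fun j => ?_) i
      · simp
      · simp only [Fin.cons_succ]
        have h1 := Polynomial.natDegree_mul_le
          (p := Polynomial.X - Polynomial.C r) (q := s j)
        rw [Polynomial.natDegree_X_sub_C] at h1
        have h2 := hs j
        omega
    · rw [Fin.sum_univ_succ]
      simp only [Fin.cons_zero, Fin.cons_succ]
      have hsq : (Polynomial.C (Real.sqrt m)) ^ 2 = Polynomial.C m := by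
        rw [← Polynomial.C_pow, Real.sq_sqrt hm0]
      have hsum2 : ∑ i : Fin k, ((Polynomial.X - Polynomial.C r) * s i) ^ 2
          = (Polynomial.X - Polynomial.C r) ^ 2 * q := by
        rw [hsum, Finset.mul_sum]
        apply Finset.sum_congr rfl
        intro i _
        ring
      rw [hsq, hsum2, ← hfac]
      rw [hh]
      ring

end Univariate

section Multivariate

variable {n : ℕ}

lemma mv_exists_top_monomial {p : MvPolynomial (Fin n) ℝ} (hp : p ≠ 0) :
    ∃ d ∈ p.support, (d.sum fun _ e => e) = p.totalDegree := by
  obtain ⟨d, hd, hdeg⟩ := Finset.exists_mem_eq_sup p.support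
    (MvPolynomial.support_nonempty.mpr hp)
    (fun s => s.sum fun _ e => e)
  exact ⟨d, hd, hdeg.symm⟩

lemma mv_degree_add {n : ℕ} (u v : Fin n →₀ ℕ) :
    (u + v).degree = u.degree + v.degree := by
  simp only [Finsupp.degree_eq_weight_one]
  exact map_add _ u v

lemma mv_degree_eq_sum (d : Fin n →₀ ℕ) : d.degree = d.sum fun _ e => e := by
  rw [Finsupp.degree, Finsupp.sum]; rfl

lemma mv_homComp_top_ne_zero {p : MvPolynomial (Fin n) ℝ} (hp : p ≠ 0) :
    homogeneousComponent p.totalDegree p ≠ 0 := by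
  obtain ⟨d, hd, hdeg⟩ := mv_exists_top_monomial hp
  intro hzero
  have := coeff_homogeneousComponent (σ := Fin n) (R := ℝ) (n := p.totalDegree) d (φ := p)
  rw [hzero, coeff_zero, if_pos (by rw [mv_degree_eq_sum]; exact hdeg)] at this
  exact (MvPolynomial.mem_support_iff.mp hd) this.symm

lemma mv_homComp_mul (a b : ℕ) (p q : MvPolynomial (Fin n) ℝ)
    (hpa : p.totalDegree ≤ a) (hqb : q.totalDegree ≤ b) :
    homogeneousComponent (a + b) (p * q) =
      homogeneousComponent a p * homogeneousComponent b q := by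
  classical
  ext d
  rw [coeff_homogeneousComponent, MvPolynomial.coeff_mul, MvPolynomial.coeff_mul]
  simp_rw [coeff_homogeneousComponent]
  by_cases hd : d.degree = a + b
  · rw [if_pos hd]
    apply Finset.sum_congr rfl
    rintro ⟨u, v⟩ huv
    rw [Finset.HasAntidiagonal.mem_antidiagonal] at huv
    have hdsum : u.degree + v.degree = a + b := by
      rw [← hd, ← huv, mv_degree_add]
    by_cases hu : u.degree = a
    · have hv : v.degree = b := by omega
      rw [if_pos hu, if_pos hv]
    · rcases lt_or_gt_of_ne hu with hlt | hgt
      · -- v.degree > b, coeff v q = 0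
        have hv : b < v.degree := by omega
        have : MvPolynomial.coeff v q = 0 := by
          apply MvPolynomial.coeff_eq_zero_of_totalDegree_lt
          calc q.totalDegree ≤ b := hqb
            _ < v.degree := hv
            _ = _ := by rw [Finsupp.degree]; rfl
        rw [this, if_neg hu, mul_zero, zero_mul]
      · have : MvPolynomial.coeff u p = 0 := by
          apply MvPolynomial.coeff_eq_zero_of_totalDegree_lt
          calc p.totalDegree ≤ a := hpa
            _ < u.degree := hgt
            _ = _ := by rw [Finsupp.degree]; rfl
        rw [this, if_neg hu, zero_mul, zero_mul]
  · rw [if_neg hd]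
    symm
    apply Finset.sum_eq_zero
    rintro ⟨u, v⟩ huv
    rw [Finset.HasAntidiagonal.mem_antidiagonal] at huv
    by_cases hu : u.degree = a
    · by_cases hv : v.degree = b
      · exfalso
        apply hd
        rw [← huv, mv_degree_add, hu, hv]
      · rw [if_neg hv, mul_zero]
    · rw [if_neg hu, zero_mul]

lemma mv_totalDegree_mul_eq {p q : MvPolynomial (Fin n) ℝ} (hp : p ≠ 0) (hq : q ≠ 0) :
    (p * q).totalDegree = p.totalDegree + q.totalDegree := by
  refine le_antisymm (totalDegree_mul p q) ?_
  by_contra hlt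
  push_neg at hlt
  have h0 : homogeneousComponent (p.totalDegree + q.totalDegree) (p * q) = 0 :=
    homogeneousComponent_eq_zero _ _ hlt
  rw [mv_homComp_mul _ _ p q le_rfl le_rfl] at h0
  exact mul_ne_zero (mv_homComp_top_ne_zero hp) (mv_homComp_top_ne_zero hq) h0

lemma mv_totalDegree_pow_eq {g : MvPolynomial (Fin n) ℝ} (hg : g ≠ 0) (k : ℕ) :
    (g ^ k).totalDegree = k * g.totalDegree := by
  induction k with
  | zero => simp
  | succ k ihk =>
    rw [pow_succ, mv_totalDegree_mul_eq (pow_ne_zero k hg) hg, ihk]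
    ring

lemma mv_totalDegree_aeval_le (q : Polynomial ℝ) (g : MvPolynomial (Fin n) ℝ) :
    (Polynomial.aeval g q : MvPolynomial (Fin n) ℝ).totalDegree
      ≤ q.natDegree * g.totalDegree := by
  rw [Polynomial.aeval_eq_sum_range]
  refine (totalDegree_finset_sum _ _).trans (Finset.sup_le fun i hi => ?_)
  refine (totalDegree_smul_le _ _).trans ((totalDegree_pow _ _).trans ?_)
  exact Nat.mul_le_mul_right _ (Nat.lt_succ_iff.mp (Finset.mem_range.mp hi))

lemma mv_totalDegree_aeval_eq (f : Polynomial ℝ) (g : MvPolynomial (Fin n) ℝ)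
    (hf : 1 ≤ f.natDegree) (hg : 1 ≤ g.totalDegree) :
    (Polynomial.aeval g f : MvPolynomial (Fin n) ℝ).totalDegree
      = f.natDegree * g.totalDegree := by
  have hg0 : g ≠ 0 := by rintro rfl; simp at hg
  have hf0 : f ≠ 0 := by rintro rfl; simp at hf
  have hlead : f.coeff f.natDegree ≠ 0 := by
    rw [← Polynomial.leadingCoeff]
    exact Polynomial.leadingCoeff_ne_zero.mpr hf0
  rw [Polynomial.aeval_eq_sum_range, Finset.sum_range_succ]
  have htop : ((f.coeff f.natDegree • g ^ f.natDegree : MvPolynomial (Fin n) ℝ)).totalDegree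
      = f.natDegree * g.totalDegree := by
    rw [MvPolynomial.smul_eq_C_mul,
      mv_totalDegree_mul_eq (by simpa using hlead) (pow_ne_zero _ hg0),
      totalDegree_C, zero_add, mv_totalDegree_pow_eq hg0]
  have hrest : (∑ i ∈ Finset.range f.natDegree,
      f.coeff i • g ^ i : MvPolynomial (Fin n) ℝ).totalDegree
      < f.natDegree * g.totalDegree := by
    have hb : (∑ i ∈ Finset.range f.natDegree,
        f.coeff i • g ^ i : MvPolynomial (Fin n) ℝ).totalDegree
        ≤ (f.natDegree - 1) * g.totalDegree := by
      refine (totalDegree_finset_sum _ _).trans (Finset.sup_le fun i hi => ?_)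
      refine (totalDegree_smul_le _ _).trans ((totalDegree_pow _ _).trans ?_)
      have : i ≤ f.natDegree - 1 := by
        have := Finset.mem_range.mp hi; omega
      exact Nat.mul_le_mul_right _ this
    refine hb.trans_lt ?_
    have h1 : f.natDegree - 1 < f.natDegree := by omega
    calc (f.natDegree - 1) * g.totalDegree
        < (f.natDegree - 1) * g.totalDegree + g.totalDegree := by omega
      _ = f.natDegree * g.totalDegree := by
          have h2 : f.natDegree - 1 + 1 = f.natDegree := by omega
          conv_rhs => rw [← h2]
          rw [Nat.succ_mul]
  rw [totalDegree_add_eq_right_of_totalDegree_lt (htop ▸ hrest), htop]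

end Multivariate

/-- if `f` is a convex univariate polynomial (`f'' ≥ 0` on `ℝ`),
`g ∈ ℝ[X₁,…,Xₙ]`, `d := ⌈deg(f∘g)/2⌉`, and `L` is a linear functional with `L(1) = 1`
nonnegative on SOS polynomials of degree at most `2d`, then `L(f∘g) ≥ f(L(g))`. -/
theorem stmt_4 (n : ℕ) (f : Polynomial ℝ)
    (hconv : ∀ x : ℝ, 0 ≤ (Polynomial.derivative (Polynomial.derivative f)).eval x)
    (g : MvPolynomial (Fin n) ℝ)
    (L : MvPolynomial (Fin n) ℝ →ₗ[ℝ] ℝ)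
    (hL1 : L 1 = 1)
    (hLsos : ∀ σ : MvPolynomial (Fin n) ℝ,
      IsSOSUpTo (((Polynomial.aeval g f : MvPolynomial (Fin n) ℝ).totalDegree + 1) / 2) σ →
        0 ≤ L σ) :
    f.eval (L g) ≤ L (Polynomial.aeval g f) := by
  classical
  have hLC : ∀ c : ℝ, L (MvPolynomial.C c) = c := by
    intro c
    have : (MvPolynomial.C c : MvPolynomial (Fin n) ℝ) = c • 1 := by
      rw [MvPolynomial.smul_eq_C_mul, mul_one]
    rw [this, map_smul, hL1, smul_eq_mul, mul_one]
  -- Case: g is a constant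
  by_cases hg : g.totalDegree = 0
  · have hgC : g = MvPolynomial.C (MvPolynomial.coeff 0 g) := by
      ext d
      rw [MvPolynomial.coeff_C]
      split_ifs with hd
      · rw [← hd]
      · by_contra hne
        have hmem : d ∈ g.support := MvPolynomial.mem_support_iff.mpr hne
        have := MvPolynomial.le_totalDegree hmem
        rw [hg, Nat.le_zero] at this
        apply hd
        symm
        ext i
        by_contra hi
        have hisup : i ∈ d.support := Finsupp.mem_support_iff.mpr fun h => hi (by simp [h])
        have : 0 < d.sum fun _ e => e := by
          rw [Finsupp.sum]
          exact Finset.sum_pos' (fun _ _ => Nat.zero_le _)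
            ⟨i, hisup, Nat.pos_of_ne_zero (Finsupp.mem_support_iff.mp hisup)⟩
        omega
    set c := MvPolynomial.coeff 0 g
    have haev : (Polynomial.aeval g f : MvPolynomial (Fin n) ℝ)
        = MvPolynomial.C (f.eval c) := by
      rw [hgC]
      rw [show (MvPolynomial.C c : MvPolynomial (Fin n) ℝ)
        = algebraMap ℝ (MvPolynomial (Fin n) ℝ) c from rfl]
      rw [Polynomial.aeval_algebraMap_apply]
      simp
    rw [haev, hLC]
    have : L g = c := by rw [hgC, hLC]
    rw [this]
  -- Case: f is a constant
  by_cases hf : f.natDegree = 0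
  · obtain ⟨c, hc⟩ := Polynomial.natDegree_eq_zero.mp hf
    rw [← hc]
    simp only [Polynomial.aeval_C, Polynomial.eval_C]
    rw [show (algebraMap ℝ (MvPolynomial (Fin n) ℝ)) c = MvPolynomial.C c from rfl, hLC]
  -- Main case
  have hf1 : 1 ≤ f.natDegree := Nat.one_le_iff_ne_zero.mpr hf
  have hg1 : 1 ≤ g.totalDegree := Nat.one_le_iff_ne_zero.mpr hg
  set a := L g with ha
  set c₂ := (Polynomial.derivative f).eval a with hc₂
  set p := f - Polynomial.C (f.eval a) - Polynomial.C c₂ * (Polynomial.X - Polynomial.C a)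
    with hp
  have hppos : ∀ x, 0 ≤ p.eval x := by
    intro x
    have := poly_tangent_le hconv a x
    simp only [hp, Polynomial.eval_sub, Polynomial.eval_mul, Polynomial.eval_C,
      Polynomial.eval_X]
    linarith
  have hpdeg : p.natDegree ≤ f.natDegree := by
    refine (Polynomial.natDegree_sub_le _ _).trans ?_
    have h1 : (f - Polynomial.C (f.eval a)).natDegree ≤ f.natDegree := by
      refine (Polynomial.natDegree_sub_le _ _).trans ?_
      simp [Polynomial.natDegree_C]
    have h2 : (Polynomial.C c₂ * (Polynomial.X - Polynomial.C a)).natDegree ≤ 1 := by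
      refine (Polynomial.natDegree_mul_le).trans ?_
      simp [Polynomial.natDegree_C, Polynomial.natDegree_X_sub_C]
    omega
  obtain ⟨k, s, hs, hsum⟩ := poly_sos_of_nonneg p.natDegree p le_rfl hppos
  -- the SOS certificate
  set D := (Polynomial.aeval g f : MvPolynomial (Fin n) ℝ).totalDegree with hD
  have hDval : D = f.natDegree * g.totalDegree := mv_totalDegree_aeval_eq f g hf1 hg1
  set σ : MvPolynomial (Fin n) ℝ := ∑ i : Fin k, (Polynomial.aeval g (s i)) ^ 2 with hσ
  have hsos : IsSOSUpTo ((D + 1) / 2) σ := by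
    refine ⟨k, fun i => Polynomial.aeval g (s i), fun i => ?_, rfl⟩
    show ((Polynomial.aeval g (s i) : MvPolynomial (Fin n) ℝ)).totalDegree ≤ (D + 1) / 2
    rw [Nat.le_div_iff_mul_le (by norm_num : 0 < 2)]
    have h1 := mv_totalDegree_aeval_le (s i) g
    have h2 := hs i
    have h3 : 2 * ((s i).natDegree * g.totalDegree) ≤ f.natDegree * g.totalDegree := by
      rw [← mul_assoc]
      exact Nat.mul_le_mul_right _ (h2.trans hpdeg)
    omega
  have hLσ : 0 ≤ L σ := hLsos σ hsos
  -- identify σ with aeval g p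
  have hσ2 : σ = Polynomial.aeval g p := by
    rw [hsum]
    rw [map_sum]
    apply Finset.sum_congr rfl
    intro i _
    rw [map_pow]
  have hexp : (Polynomial.aeval g p : MvPolynomial (Fin n) ℝ)
      = Polynomial.aeval g f - MvPolynomial.C (f.eval a)
        - MvPolynomial.C c₂ * (g - MvPolynomial.C a) := by
    simp only [hp, map_sub, map_mul, Polynomial.aeval_X, Polynomial.aeval_C]
    rw [show (algebraMap ℝ (MvPolynomial (Fin n) ℝ)) (f.eval a) = MvPolynomial.C (f.eval a)
      from rfl]
    rw [show (algebraMap ℝ (MvPolynomial (Fin n) ℝ)) c₂ = MvPolynomial.C c₂ from rfl]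
    rw [show (algebraMap ℝ (MvPolynomial (Fin n) ℝ)) a = MvPolynomial.C a from rfl]
  have hLval : L σ = L (Polynomial.aeval g f) - f.eval a := by
    rw [hσ2, hexp]
    rw [map_sub, map_sub]
    rw [hLC]
    have : L (MvPolynomial.C c₂ * (g - MvPolynomial.C a)) = c₂ * (L g - a) := by
      rw [← MvPolynomial.smul_eq_C_mul, map_smul, smul_eq_mul, map_sub, hLC]
    rw [this, ← ha, sub_self, mul_zero, sub_zero]
  linarith [hLσ, hLval.symm.trans_le (le_refl (L σ))]
end

section
/- Let g₁,…,gₘ ∈ ℝ[X₁,…,Xₙ], K := {x ∈ ℝⁿ : gⱼ(x) ≥ 0, j = 1,…,m}, and assume Slater's condition holds. Let f ∈ ℝ[X₁,…,Xₙ] attain its infimum f* := inf{f(x) : x ∈ K} at some x* ∈ K. If f is SOS-convex and −gⱼ is SOS-convex for every j = 1,…,m, then there exist an SOS polynomial σ₀ that is convex on ℝⁿ and scalars λ₁,…,λₘ ≥ 0 such that f − f* = σ₀ + Σⱼ λⱼ gⱼ. -/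
open MvPolynomial Matrix

noncomputable section

theorem deriv_aeval {S : Type*} [CommRing S] [Algebra ℝ S]
    (v : Fin n → Polynomial S) (p : MvPolynomial (Fin n) ℝ) :
    Polynomial.derivative (MvPolynomial.aeval v p) =
      ∑ i, MvPolynomial.aeval v (pderiv i p) * Polynomial.derivative (v i) := by
  induction p using MvPolynomial.induction_on with
  | C a => simp
  | add p q hp hq => simp [hp, hq, map_add, add_mul, Finset.sum_add_distrib]
  | mul_X p i hp =>
      simp only [_root_.map_mul, MvPolynomial.aeval_X, Polynomial.derivative_mul, hp,
        pderiv_mul, pderiv_X, map_add, add_mul, Finset.sum_add_distrib]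
      congr 1
      · rw [Finset.sum_mul]
        refine Finset.sum_congr rfl fun j _ => ?_
        ring
      · rw [Finset.sum_eq_single i]
        · simp
        · intro j _ hji
          simp [Pi.single_apply, hji]
        · simp

theorem eval_aeval {S : Type*} [CommRing S] [Algebra ℝ S]
    (v : Fin n → Polynomial S) (p : MvPolynomial (Fin n) ℝ) (s : S) :
    Polynomial.eval s (MvPolynomial.aeval v p) =
      MvPolynomial.aeval (fun i => Polynomial.eval s (v i)) p := by
  induction p using MvPolynomial.induction_on with
  | C a => simp [MvPolynomial.algebraMap_eq]
  | add p q hp hq => simp [hp, hq]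
  | mul_X p i hp => simp [hp]


def itg (p : Polynomial (MvPolynomial (Fin n) ℝ)) : MvPolynomial (Fin n) ℝ :=
  p.sum fun k c => (((k : ℝ) + 1)⁻¹) • c

theorem itg_add (p q : Polynomial (MvPolynomial (Fin n) ℝ)) :
    itg (p + q) = itg p + itg q :=
  Polynomial.sum_add_index p q _ (by simp) (by intros; rw [smul_add])

theorem itg_zero : itg (0 : Polynomial (MvPolynomial (Fin n) ℝ)) = 0 := by simp [itg]

theorem itg_sum {ι : Type*} (s : Finset ι) (f : ι → Polynomial (MvPolynomial (Fin n) ℝ)) :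
    itg (∑ i ∈ s, f i) = ∑ i ∈ s, itg (f i) := by
  classical
  induction s using Finset.induction_on with
  | empty => simp [itg_zero]
  | insert _ _ hx ih => rename_i a s; rw [Finset.sum_insert hx, itg_add, ih, Finset.sum_insert hx]

theorem itg_monomial (k : ℕ) (a : MvPolynomial (Fin n) ℝ) :
    itg (Polynomial.monomial k a) = (((k : ℝ) + 1)⁻¹) • a := by
  unfold itg
  rw [Polynomial.sum_monomial_index]
  simp

def wgt (j : ℕ) : ℝ := ((j : ℝ) + 1)⁻¹ - ((j : ℝ) + 2)⁻¹

theorem itg_one_sub_X_mul_monomial (j : ℕ) (a : MvPolynomial (Fin n) ℝ) :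
    itg ((1 - Polynomial.X) * Polynomial.monomial j a) = wgt j • a := by
  rw [sub_mul, one_mul, Polynomial.X_mul_monomial, sub_eq_add_neg, ← Polynomial.monomial_neg,
    itg_add, itg_monomial, itg_monomial, wgt, sub_smul]
  push_cast
  rw [smul_neg, ← sub_eq_add_neg]
  congr 2
  ring

theorem integral_wgt (j : ℕ) : ∫ t in (0:ℝ)..1, (1 - t) * t ^ j = wgt j := by
  have : ∀ t : ℝ, (1 - t) * t ^ j = t ^ j - t ^ (j+1) := by intro t; ring
  simp_rw [this]
  rw [intervalIntegral.integral_sub ((continuous_pow j).intervalIntegrable 0 1)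
    ((continuous_pow (j+1)).intervalIntegrable 0 1), integral_pow, integral_pow]
  simp only [one_pow, zero_pow (by omega : j+1 ≠ 0), zero_pow (by omega : j+1+1 ≠ 0), wgt]
  push_cast
  rw [div_eq_mul_inv, div_eq_mul_inv]
  ring

theorem momentM_psd (d : ℕ) :
    Matrix.PosSemidef (Matrix.of fun k l : Fin d => wgt ((k : ℕ) + (l : ℕ))) := by
  rw [Matrix.posSemidef_iff_dotProduct_mulVec]
  constructor
  · ext k l
    simp only [Matrix.conjTranspose_apply, Matrix.of_apply, star_trivial]
    rw [add_comm]
  · intro x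
    have key : star x ⬝ᵥ (Matrix.of fun k l : Fin d => wgt ((k : ℕ) + (l : ℕ))) *ᵥ x
        = ∫ t in (0:ℝ)..1, (1 - t) * (∑ k : Fin d, x k * t ^ (k : ℕ)) ^ 2 := by
      have expand : ∀ t : ℝ, (1 - t) * (∑ k : Fin d, x k * t ^ (k : ℕ)) ^ 2
          = ∑ k : Fin d, ∑ l : Fin d, x k * x l * ((1 - t) * t ^ ((k : ℕ) + (l : ℕ))) := by
        intro t
        rw [sq, Finset.sum_mul_sum]
        rw [Finset.mul_sum]
        refine Finset.sum_congr rfl fun k _ => ?_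
        rw [Finset.mul_sum]
        refine Finset.sum_congr rfl fun l _ => ?_
        rw [pow_add]; ring
      simp_rw [expand]
      rw [intervalIntegral.integral_finset_sum]
      swap
      · intro k _
        apply Continuous.intervalIntegrable
        continuity
      have : ∀ k : Fin d, (∫ t in (0:ℝ)..1, ∑ l : Fin d, x k * x l * ((1 - t) * t ^ ((k:ℕ) + (l:ℕ))))
          = ∑ l : Fin d, x k * x l * wgt ((k:ℕ) + (l:ℕ)) := by
        intro k
        rw [intervalIntegral.integral_finset_sum]
        swap
        · intro l _
          apply Continuous.intervalIntegrable
          continuity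
        refine Finset.sum_congr rfl fun l _ => ?_
        rw [intervalIntegral.integral_const_mul, integral_wgt]
      simp_rw [this]
      simp only [dotProduct, Matrix.mulVec, dotProduct, star_trivial,
        Matrix.of_apply, Finset.mul_sum]
      refine Finset.sum_congr rfl fun k _ => Finset.sum_congr rfl fun l _ => ?_
      ring
    rw [key]
    apply intervalIntegral.integral_nonneg (by norm_num)
    intro u hu
    have h1 : 0 ≤ 1 - u := by
      simp only [Set.mem_Icc] at hu; linarith [hu.2]
    positivity

theorem wgt_eq_BB (d : ℕ) : ∃ B : Matrix (Fin d) (Fin d) ℝ,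
    ∀ k l : Fin d, wgt ((k : ℕ) + (l : ℕ)) = ∑ j, B j k * B j l := by
  obtain ⟨B, hB⟩ : ∃ B : Matrix (Fin d) (Fin d) ℝ,
      (Matrix.of fun k l : Fin d => wgt ((k : ℕ) + (l : ℕ))) = B.conjTranspose * B := by
    have hM := momentM_psd d
    open scoped MatrixOrder in
    obtain ⟨X, hX, -, hA⟩ := CFC.exists_sqrt_of_isSelfAdjoint_of_quasispectrumRestricts
      hM.isHermitian (QuasispectrumRestricts.nnreal_of_nonneg hM.nonneg)
    exact ⟨X, by rw [← Matrix.star_eq_conjTranspose, hX.star_eq]; exact hA.symm⟩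
  refine ⟨B, fun k l => ?_⟩
  have := congrFun (congrFun hB k) l
  simp only [Matrix.of_apply] at this
  rw [this, Matrix.mul_apply]
  exact Finset.sum_congr rfl fun j _ => by rw [Matrix.conjTranspose_apply, star_trivial]

theorem isSOS_itg_sq (Q : Polynomial (MvPolynomial (Fin n) ℝ)) :
    IsSOS (itg ((1 - Polynomial.X) * Q ^ 2)) := by
  set d := Q.natDegree + 1 with hd
  have hQ : Q = ∑ k : Fin d, Polynomial.monomial (k : ℕ) (Q.coeff (k : ℕ)) := by
    rw [Fin.sum_univ_eq_sum_range (fun k => Polynomial.monomial k (Q.coeff k)) d]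
    exact Q.as_sum_range' d (by omega)
  obtain ⟨B, hB⟩ := wgt_eq_BB d
  refine ⟨d, fun j => ∑ k : Fin d, B j k • Q.coeff (k : ℕ), ?_⟩
  have expand : (1 - Polynomial.X) * Q ^ 2
      = ∑ k : Fin d, ∑ l : Fin d, (1 - Polynomial.X) *
          Polynomial.monomial ((k : ℕ) + (l : ℕ)) (Q.coeff (k : ℕ) * Q.coeff (l : ℕ)) := by
    conv_lhs => rw [sq, hQ]
    rw [Finset.sum_mul_sum, Finset.mul_sum]
    refine Finset.sum_congr rfl fun k _ => ?_
    rw [Finset.mul_sum]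
    refine Finset.sum_congr rfl fun l _ => ?_
    rw [Polynomial.monomial_mul_monomial]
  rw [expand, itg_sum]
  have step : ∀ k : Fin d, itg (∑ l : Fin d, (1 - Polynomial.X) *
      Polynomial.monomial ((k : ℕ) + (l : ℕ)) (Q.coeff (k : ℕ) * Q.coeff (l : ℕ)))
      = ∑ l : Fin d, wgt ((k : ℕ) + (l : ℕ)) • (Q.coeff (k : ℕ) * Q.coeff (l : ℕ)) := by
    intro k
    rw [itg_sum]
    exact Finset.sum_congr rfl fun l _ => itg_one_sub_X_mul_monomial _ _
  simp_rw [step, hB]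
  have rhs : ∀ j : Fin d, (∑ k : Fin d, B j k • Q.coeff (k : ℕ)) ^ 2
      = ∑ k : Fin d, ∑ l : Fin d, (B j k * B j l) • (Q.coeff (k : ℕ) * Q.coeff (l : ℕ)) := by
    intro j
    rw [sq, Finset.sum_mul_sum]
    exact Finset.sum_congr rfl fun k _ => Finset.sum_congr rfl fun l _ =>
      smul_mul_smul_comm _ _ _ _
  simp_rw [rhs, Finset.sum_smul]
  have swap1 : ∀ k : Fin d, (∑ l : Fin d, ∑ j : Fin d,
        (B j k * B j l) • (Q.coeff (k : ℕ) * Q.coeff (l : ℕ)))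
      = ∑ j : Fin d, ∑ l : Fin d, (B j k * B j l) • (Q.coeff (k : ℕ) * Q.coeff (l : ℕ)) :=
    fun k => Finset.sum_comm
  simp_rw [swap1]
  exact Finset.sum_comm

theorem natCast_mul_eq_smul (m : ℕ) (a : MvPolynomial (Fin n) ℝ) :
    a * (m : MvPolynomial (Fin n) ℝ) = ((m : ℝ)) • a := by
  rw [mul_comm]
  rw [show ((m : MvPolynomial (Fin n) ℝ)) = algebraMap ℝ _ (m : ℝ) by push_cast; rfl]
  rw [← Algebra.smul_def]

theorem taylor_id (q : Polynomial (MvPolynomial (Fin n) ℝ)) :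
    q.eval 1 = q.eval 0 + q.derivative.eval 0
      + itg ((1 - Polynomial.X) * Polynomial.derivative (Polynomial.derivative q)) := by
  induction q using Polynomial.induction_on' with
  | add p q hp hq =>
      simp only [map_add, Polynomial.eval_add, mul_add, itg_add, hp, hq]
      ring
  | monomial k a =>
      match k with
      | 0 => simp [itg, Polynomial.sum]
      | 1 => simp [Polynomial.derivative_monomial, itg, Polynomial.sum]
      | (k + 2) =>
        rw [Polynomial.derivative_monomial, Polynomial.derivative_monomial]
        simp only [Nat.add_sub_cancel, show k+2-1-1 = k from by omega, show k+2-1 = k+1 from by omega,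
          Polynomial.eval_monomial]
        have h1 : ((1 : Polynomial (MvPolynomial (Fin n) ℝ)) - Polynomial.X) *
            Polynomial.monomial k (a * ((k+2:ℕ) : MvPolynomial (Fin n) ℝ) * ((k+1:ℕ) : MvPolynomial (Fin n) ℝ)) =
            Polynomial.monomial k (a * ((k+2:ℕ):MvPolynomial (Fin n) ℝ) * ((k+1:ℕ):MvPolynomial (Fin n) ℝ))
            - Polynomial.monomial (k+1) (a * ((k+2:ℕ):MvPolynomial (Fin n) ℝ) * ((k+1:ℕ):MvPolynomial (Fin n) ℝ)) := by
          rw [sub_mul, one_mul, sub_right_inj, Polynomial.X_mul_monomial]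
        rw [h1, sub_eq_add_neg, ← Polynomial.monomial_neg, itg_add, itg_monomial, itg_monomial]
        rw [one_pow, mul_one, zero_pow (by omega : k+2 ≠ 0), zero_pow (by omega : k+1 ≠ 0),
          mul_zero, mul_zero, zero_add, zero_add]
        rw [mul_assoc, ← Nat.cast_mul, natCast_mul_eq_smul, ← neg_smul, smul_smul, smul_smul,
          ← add_smul]
        suffices h : ((k:ℝ) + 1)⁻¹ * (((k + 2) * (k + 1) : ℕ) : ℝ)
            + ((((k+1 : ℕ) : ℝ)) + 1)⁻¹ * -(((k + 2) * (k + 1) : ℕ) : ℝ) = 1 by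
          rw [h, one_smul]
        have hk1 : ((k:ℝ) + 1) ≠ 0 := by positivity
        have hk3 : ((k:ℝ) + 1 + 1) ≠ 0 := by positivity
        push_cast
        field_simp
        ring

theorem aeval_real (v : Fin n → ℝ) (p : MvPolynomial (Fin n) ℝ) :
    MvPolynomial.aeval v p = eval v p := by
  rw [← MvPolynomial.coe_aeval_eq_eval]; rfl

theorem sum_sq_identity {ι κ : Type*} [Fintype ι] [Fintype κ] (A : ι → κ → ℝ) :
    ∑ i, ∑ j, ∑ k, A j k * A i k = ∑ k : κ, (∑ i, A i k) ^ 2 := by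
  have rhs1 : ∀ k : κ, (∑ i, A i k) ^ 2 = ∑ i, ∑ j, A j k * A i k := by
    intro k
    rw [sq, Finset.sum_mul_sum]
    refine Finset.sum_congr rfl fun i _ => Finset.sum_congr rfl fun j _ => mul_comm _ _
  simp_rw [rhs1]
  have s1 : ∀ i : ι, (∑ j : ι, ∑ k : κ, A j k * A i k) = ∑ k : κ, ∑ j : ι, A j k * A i k :=
    fun i => Finset.sum_comm
  simp_rw [s1]
  exact Finset.sum_comm

theorem convexOn_eval_of_sosConvex (f : MvPolynomial (Fin n) ℝ) (hf : IsSOSConvex f) :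
    ConvexOn ℝ Set.univ (fun x => eval x f) := by
  obtain ⟨s, L, hL⟩ := hf
  have key : ∀ x y : Fin n → ℝ, ConvexOn ℝ Set.univ
      (fun t : ℝ => Polynomial.eval t
        (MvPolynomial.aeval (fun i => Polynomial.C (x i) + Polynomial.C (y i - x i) * Polynomial.X) f)) := by
    intro x y
    set v : Fin n → Polynomial ℝ :=
      fun i => Polynomial.C (x i) + Polynomial.C (y i - x i) * Polynomial.X with hv
    have hderiv_v : ∀ i, Polynomial.derivative (v i) = Polynomial.C (y i - x i) := by
      intro i; simp [hv]
    have hd1 : Polynomial.derivative (MvPolynomial.aeval v f)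
        = ∑ i, MvPolynomial.aeval v (pderiv i f) * Polynomial.C (y i - x i) := by
      rw [deriv_aeval]; simp_rw [hderiv_v]
    have hd2 : Polynomial.derivative (Polynomial.derivative (MvPolynomial.aeval v f))
        = ∑ i, ∑ j, MvPolynomial.aeval v (pderiv j (pderiv i f))
            * Polynomial.C (y j - x j) * Polynomial.C (y i - x i) := by
      rw [hd1, map_sum]
      refine Finset.sum_congr rfl fun i _ => ?_
      rw [Polynomial.derivative_mul, Polynomial.derivative_C, mul_zero, add_zero,
        deriv_aeval, Finset.sum_mul]
      refine Finset.sum_congr rfl fun j _ => ?_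
      rw [hderiv_v]
    have hHess : ∀ i j, pderiv j (pderiv i f) = ∑ k, L j k * L i k := by
      intro i j
      have := congrFun (congrFun hL j) i
      simp only [Matrix.of_apply] at this
      rw [this, Matrix.mul_apply]
      rfl
    apply convexOn_univ_of_deriv2_nonneg
    · exact (MvPolynomial.aeval v f).differentiable
    · have : deriv (fun t : ℝ => Polynomial.eval t (MvPolynomial.aeval v f))
          = fun t => Polynomial.eval t (Polynomial.derivative (MvPolynomial.aeval v f)) := by
        funext t; exact Polynomial.deriv _
      rw [this]
      exact (Polynomial.derivative (MvPolynomial.aeval v f)).differentiable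
    · intro t
      have e1 : deriv (fun t : ℝ => Polynomial.eval t (MvPolynomial.aeval v f))
          = fun t => Polynomial.eval t (Polynomial.derivative (MvPolynomial.aeval v f)) := by
        funext t; exact Polynomial.deriv _
      have e2 : deriv^[2] (fun t : ℝ => Polynomial.eval t (MvPolynomial.aeval v f)) t
          = Polynomial.eval t (Polynomial.derivative (Polynomial.derivative (MvPolynomial.aeval v f))) := by
        show deriv (deriv fun t : ℝ => Polynomial.eval t (MvPolynomial.aeval v f)) t = _
        rw [e1]
        exact Polynomial.deriv _
      rw [e2, hd2]
      simp_rw [hHess]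
      have expand : Polynomial.eval t (∑ i, ∑ j, MvPolynomial.aeval v (∑ k, L j k * L i k)
            * Polynomial.C (y j - x j) * Polynomial.C (y i - x i))
          = ∑ k, (∑ i, Polynomial.eval t (MvPolynomial.aeval v (L i k)) * (y i - x i)) ^ 2 := by
        rw [Polynomial.eval_finset_sum]
        have lhs1 : ∀ i : Fin n, Polynomial.eval t (∑ j, MvPolynomial.aeval v (∑ k, L j k * L i k)
              * Polynomial.C (y j - x j) * Polynomial.C (y i - x i))
            = ∑ j, ∑ k, (Polynomial.eval t (MvPolynomial.aeval v (L j k)) * (y j - x j))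
                * (Polynomial.eval t (MvPolynomial.aeval v (L i k)) * (y i - x i)) := by
          intro i
          rw [Polynomial.eval_finset_sum]
          refine Finset.sum_congr rfl fun j _ => ?_
          rw [Polynomial.eval_mul, Polynomial.eval_mul, Polynomial.eval_C, Polynomial.eval_C,
            map_sum, Polynomial.eval_finset_sum, Finset.sum_mul, Finset.sum_mul]
          refine Finset.sum_congr rfl fun k _ => ?_
          rw [_root_.map_mul, Polynomial.eval_mul]
          ring
        simp_rw [lhs1]
        exact sum_sq_identity (fun i k => Polynomial.eval t (MvPolynomial.aeval v (L i k)) * (y i - x i))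
      rw [expand]
      positivity
  refine ⟨convex_univ, ?_⟩
  intro x _ y _ a b ha hb hab
  have h1 : ∀ t : ℝ, Polynomial.eval t
      (MvPolynomial.aeval (fun i => Polynomial.C (x i) + Polynomial.C (y i - x i) * Polynomial.X) f)
      = eval (fun i => x i + (y i - x i) * t) f := by
    intro t
    rw [eval_aeval]
    simp only [Polynomial.eval_add, Polynomial.eval_C, Polynomial.eval_mul, Polynomial.eval_X]
    rw [aeval_real]
  have hc := (key x y).2 (Set.mem_univ (0:ℝ)) (Set.mem_univ (1:ℝ)) ha hb hab
  simp only [smul_eq_mul, h1] at hc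
  simp only [smul_eq_mul]
  have e0 : (fun i => x i + (y i - x i) * (a * 0 + b * 1)) = a • x + b • y := by
    funext i
    simp only [Pi.add_apply, Pi.smul_apply, smul_eq_mul]
    have : a = 1 - b := by linarith
    rw [this]; ring
  have e1 : (fun i => x i + (y i - x i) * 0) = x := by funext i; ring_nf
  have e2 : (fun i => x i + (y i - x i) * 1) = y := by funext i; ring_nf
  rw [e0, e1, e2] at hc
  exact hc

theorem le_zero_of_forall_le_eps {a c : ℝ} (h : ∀ ε : ℝ, 0 < ε → a ≤ ε * c) : a ≤ 0 := by
  by_contra hab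
  push_neg at hab
  rcases le_or_gt c 0 with hc | hc
  · have := h 1 one_pos; nlinarith
  · have := h (a / (2 * c)) (by positivity)
    have hx : a / (2 * c) * c = a / 2 := by field_simp
    linarith

theorem convex_comb_pos {a b P Q : ℝ} (ha : 0 ≤ a) (hb : 0 ≤ b) (hab : a + b = 1)
    (hP : 0 < P) (hQ : 0 < Q) : 0 < a * P + b * Q := by
  rcases eq_or_lt_of_le ha with h0 | h0
  · have hb1 : b = 1 := by linarith
    rw [← h0, hb1]; nlinarith
  · exact add_pos_of_pos_of_nonneg (mul_pos h0 hP) (mul_nonneg hb hQ.le)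

theorem lagrange_multipliers {n m : ℕ} (G : Fin m → (Fin n → ℝ) → ℝ) (F : (Fin n → ℝ) → ℝ)
    (hGconc : ∀ j, ConcaveOn ℝ Set.univ (G j)) (hFconv : ConvexOn ℝ Set.univ F)
    (x₀ : Fin n → ℝ) (slater : ∀ j, 0 < G j x₀)
    (fstar : ℝ) (xstar : Fin n → ℝ) (hxK : ∀ j, 0 ≤ G j xstar)
    (hfx : F xstar = fstar) (hmin : ∀ x, (∀ j, 0 ≤ G j x) → fstar ≤ F x) :
    ∃ lam : Fin m → ℝ, (∀ j, 0 ≤ lam j) ∧ ∀ x, ∑ j, lam j * G j x ≤ F x - fstar := by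
  classical
  set E := (Fin m → ℝ) × ℝ
  set Ds : Set E := {p | (∀ j, 0 < p.1 j) ∧ 0 < p.2} with hDs
  set Cs : Set E := {p | ∃ x, (∀ j, p.1 j ≤ G j x) ∧ p.2 ≤ fstar - F x} with hCs
  have hDopen : IsOpen Ds := by
    have : Ds = (⋂ j, {p : E | 0 < p.1 j}) ∩ {p : E | 0 < p.2} := by
      ext p; simp [hDs, Set.mem_iInter, Set.mem_setOf_eq]
    rw [this]
    refine IsOpen.inter (isOpen_iInter_of_finite fun j => ?_) ?_
    · exact isOpen_lt continuous_const ((continuous_apply j).comp continuous_fst)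
    · exact isOpen_lt continuous_const continuous_snd
  have hDconv : Convex ℝ Ds := by
    rintro p ⟨hp1, hp2⟩ q ⟨hq1, hq2⟩ a b ha hb hab
    exact ⟨fun j => convex_comb_pos ha hb hab (hp1 j) (hq1 j),
      convex_comb_pos ha hb hab hp2 hq2⟩
  have hCconv : Convex ℝ Cs := by
    rintro p ⟨xp, hp1, hp2⟩ q ⟨xq, hq1, hq2⟩ a b ha hb hab
    refine ⟨a • xp + b • xq, fun j => ?_, ?_⟩
    · have h1 : a * p.1 j + b * q.1 j ≤ a * G j xp + b * G j xq :=
        add_le_add (mul_le_mul_of_nonneg_left (hp1 j) ha)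
          (mul_le_mul_of_nonneg_left (hq1 j) hb)
      have h2 := (hGconc j).2 (Set.mem_univ xp) (Set.mem_univ xq) ha hb hab
      simp only [smul_eq_mul] at h2
      exact le_trans h1 h2
    · have h1 : a * p.2 + b * q.2 ≤ a * (fstar - F xp) + b * (fstar - F xq) :=
        add_le_add (mul_le_mul_of_nonneg_left hp2 ha)
          (mul_le_mul_of_nonneg_left hq2 hb)
      have h2 := hFconv.2 (Set.mem_univ xp) (Set.mem_univ xq) ha hb hab
      simp only [smul_eq_mul] at h2
      show (a • p + b • q).2 ≤ fstar - F (a • xp + b • xq)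
      have : (a • p + b • q).2 = a * p.2 + b * q.2 := rfl
      rw [this]
      have e : a * (fstar - F xp) + b * (fstar - F xq)
          = (a + b) * fstar - (a * F xp + b * F xq) := by ring
      rw [hab, one_mul] at e
      linarith
  have hdisj : Disjoint Ds Cs := by
    rw [Set.disjoint_left]
    rintro p ⟨hpos, hr⟩ ⟨x, hx1, hx2⟩
    have hxK' : ∀ j, 0 ≤ G j x := fun j => le_trans (hpos j).le (hx1 j)
    have := hmin x hxK'
    linarith
  obtain ⟨φ, u, hD, hC⟩ := geometric_hahn_banach_open hDconv hDopen hCconv hdisj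
  set z : E := ((fun _ => 1 : Fin m → ℝ), (1 : ℝ)) with hz
  have hεz : ∀ ε : ℝ, 0 < ε → ε * φ z < u := by
    intro ε hε
    have hmem : ε • z ∈ Ds := by
      constructor
      · intro j
        show 0 < ε * (1 : ℝ)
        simpa using hε
      · show 0 < ε * (1 : ℝ)
        simpa using hε
    have := hD (ε • z) hmem
    simpa [_root_.map_smul, smul_eq_mul] using this
  have hu0 : 0 ≤ u := by
    by_contra h
    push_neg at h
    rcases le_or_gt 0 (φ z) with hz0 | hz0
    · have := hεz 1 one_pos; linarith
    · have hεpos : 0 < u / (2 * φ z) := div_pos_of_neg_of_neg h (by linarith)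
      have := hεz _ hεpos
      have hφne : φ z ≠ 0 := ne_of_lt hz0
      have he : u / (2 * φ z) * φ z = u / 2 := by
        field_simp
      rw [he] at this
      linarith
  have hcone : ∀ w : E, (∀ j, 0 ≤ w.1 j) → 0 ≤ w.2 → φ w ≤ 0 := by
    intro w hw1 hw2
    have key : ∀ ε : ℝ, 0 < ε → φ w ≤ ε * (-φ z) := by
      intro ε hε
      have hsub : ∀ s : ℝ, 0 < s → s * (φ w + ε * φ z) < u := by
        intro s hs
        have hmem : s • (w + ε • z) ∈ Ds := by
          constructor
          · intro j
            show 0 < s * (w.1 j + ε * 1)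
            exact mul_pos hs (by have := hw1 j; simp only [mul_one]; linarith)
          · show 0 < s * (w.2 + ε * 1)
            exact mul_pos hs (by simp only [mul_one]; linarith)
        have := hD _ hmem
        simpa [map_add, _root_.map_smul, smul_eq_mul, mul_add] using this
      have h2 : φ w + ε * φ z ≤ 0 := by
        by_contra hpos
        push_neg at hpos
        have := hsub ((|u| + 1) / (φ w + ε * φ z)) (by positivity)
        rw [div_mul_cancel₀ _ (ne_of_gt hpos)] at this
        have := le_abs_self u
        linarith
      linarith
    exact le_zero_of_forall_le_eps key
  have hdecomp : ∀ (vv : Fin m → ℝ) (r : ℝ),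
      φ (vv, r) = ∑ j, vv j * φ (Pi.single j 1, 0) + r * φ (0, 1) := by
    intro vv r
    have hsplit : ((vv, r) : E) =
        (∑ j, vv j • ((Pi.single j 1 : Fin m → ℝ), (0 : ℝ))) + r • ((0 : Fin m → ℝ), (1 : ℝ)) := by
      have h1 : (∑ j, vv j • ((Pi.single j 1 : Fin m → ℝ), (0 : ℝ)))
          = ((∑ j, vv j • (Pi.single j 1 : Fin m → ℝ)), (0 : ℝ)) := by
        rw [Prod.ext_iff]
        constructor
        · rw [Prod.fst_sum]; rfl
        · rw [Prod.snd_sum]; simp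
      rw [h1]
      have h2 : (∑ j, vv j • (Pi.single j 1 : Fin m → ℝ)) = vv := by
        funext i
        rw [Finset.sum_apply]
        rw [Finset.sum_eq_single i]
        · simp
        · intro j _ hji
          simp [Pi.single_apply, hji]
        · simp
      rw [h2]
      ext <;> simp
    rw [hsplit, map_add, map_sum, _root_.map_smul]
    simp only [smul_eq_mul]
    congr 1
    refine Finset.sum_congr rfl fun j _ => ?_
    rw [_root_.map_smul, smul_eq_mul]
  set lam' : Fin m → ℝ := fun j => -φ (Pi.single j 1, 0) with hlam'
  set μ : ℝ := -φ ((0 : Fin m → ℝ), (1 : ℝ)) with hμ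
  have hlam'0 : ∀ j, 0 ≤ lam' j := by
    intro j
    have := hcone (Pi.single j 1, 0) (fun i => by
      simp [Pi.single_apply]; split <;> norm_num) le_rfl
    simp [hlam']; linarith
  have hμ0 : 0 ≤ μ := by
    have := hcone ((0 : Fin m → ℝ), (1 : ℝ)) (fun i => le_rfl) zero_le_one
    simp [hμ]; linarith
  have hkey : ∀ x : Fin n → ℝ, ∑ j, lam' j * G j x + μ * (fstar - F x) ≤ 0 := by
    intro x
    have hmem : ((fun j => G j x, fstar - F x) : E) ∈ Cs :=
      ⟨x, fun j => le_rfl, le_rfl⟩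
    have h1 := hC _ hmem
    rw [hdecomp] at h1
    have h2 : ∑ j, G j x * φ (Pi.single j 1, 0) = -∑ j, lam' j * G j x := by
      rw [← Finset.sum_neg_distrib]
      refine Finset.sum_congr rfl fun j _ => ?_
      simp [hlam']; ring
    rw [h2] at h1
    have : μ * (fstar - F x) = -((fstar - F x) * φ (0, 1)) := by
      simp [hμ]; ring
    rw [this]
    linarith
  have hμpos : 0 < μ := by
    rcases eq_or_lt_of_le hμ0 with h0 | h0
    · exfalso
      have h1 := hkey x₀
      rw [← h0, zero_mul, add_zero] at h1
      have hterm : ∀ j ∈ Finset.univ, 0 ≤ lam' j * G j x₀ :=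
        fun j _ => mul_nonneg (hlam'0 j) (slater j).le
      have hallz := (Finset.sum_eq_zero_iff_of_nonneg hterm).mp
        (le_antisymm h1 (Finset.sum_nonneg hterm))
      have hlamz : ∀ j, lam' j = 0 := by
        intro j
        have := hallz j (Finset.mem_univ j)
        rcases mul_eq_zero.mp this with h | h
        · exact h
        · exact absurd h (ne_of_gt (slater j))
      have hφ0 : ∀ p : E, φ p = 0 := by
        intro p
        rw [show p = (p.1, p.2) from rfl, hdecomp]
        have e1 : ∀ j, φ (Pi.single j 1, 0) = 0 := by
          intro j; have := hlamz j; simp [hlam'] at this; linarith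
        have e2 : φ ((0 : Fin m → ℝ), (1:ℝ)) = 0 := by
          simp [hμ] at h0; linarith
        simp [e1, e2]
      have hzD : z ∈ Ds := ⟨fun j => one_pos, one_pos⟩
      have h2 := hD z hzD
      rw [hφ0 z] at h2
      have hmemC : ((fun j => G j xstar, (0:ℝ)) : E) ∈ Cs :=
        ⟨xstar, fun j => le_rfl, by rw [hfx]; simp⟩
      have h3 := hC _ hmemC
      rw [hφ0 _] at h3
      linarith
    · exact h0
  refine ⟨fun j => lam' j / μ, fun j => div_nonneg (hlam'0 j) (le_of_lt hμpos), fun x => ?_⟩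
  have h1 := hkey x
  have e : ∑ j, (lam' j / μ) * G j x = (∑ j, lam' j * G j x) / μ := by
    rw [Finset.sum_div]
    exact Finset.sum_congr rfl fun j _ => by ring
  show ∑ j, (lam' j / μ) * G j x ≤ F x - fstar
  rw [e, div_le_iff₀ hμpos]
  have e2 : (F x - fstar) * μ = -(μ * (fstar - F x)) := by ring
  linarith

/-- P6: formal partial derivatives vanish at a global minimizer. -/
theorem pderiv_eval_zero_of_min (p : MvPolynomial (Fin n) ℝ) (u : Fin n → ℝ)
    (hmin : ∀ x, eval u p ≤ eval x p) (i : Fin n) : eval u (pderiv i p) = 0 := by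
  classical
  set v : Fin n → Polynomial ℝ :=
    fun j => Polynomial.C (u j) + Polynomial.C (if i = j then (1:ℝ) else 0) * Polynomial.X with hv
  set ψ : ℝ → ℝ := fun t => Polynomial.eval t (MvPolynomial.aeval v p) with hψ
  have hψt : ∀ t, ψ t = eval (fun j => u j + (if i = j then (1:ℝ) else 0) * t) p := by
    intro t
    rw [hψ]
    simp only
    rw [eval_aeval]
    simp only [hv, Polynomial.eval_add, Polynomial.eval_C, Polynomial.eval_mul, Polynomial.eval_X]
    rw [aeval_real]
  have hψ0 : ψ 0 = eval u p := by
    rw [hψt]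
    have : (fun j => u j + (if i = j then (1:ℝ) else 0) * 0) = u := by
      funext j; ring
    rw [this]
  have hlocmin : IsLocalMin ψ 0 := by
    apply Filter.Eventually.of_forall
    intro t
    show ψ 0 ≤ ψ t
    rw [hψ0, hψt t]
    exact hmin _
  have hd := hlocmin.deriv_eq_zero
  have hderiv : deriv ψ 0 = eval u (pderiv i p) := by
    have e1 : deriv ψ 0 = Polynomial.eval 0 (Polynomial.derivative (MvPolynomial.aeval v p)) :=
      Polynomial.deriv _
    rw [e1, deriv_aeval, Polynomial.eval_finset_sum]
    have hterm : ∀ j, Polynomial.eval 0 (MvPolynomial.aeval v (pderiv j p)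
          * Polynomial.derivative (v j))
        = (if i = j then (1:ℝ) else 0) * eval u (pderiv j p) := by
      intro j
      rw [Polynomial.eval_mul]
      have hdv : Polynomial.derivative (v j) = Polynomial.C (if i = j then (1:ℝ) else 0) := by
        simp only [hv]
        rw [Polynomial.derivative_add, Polynomial.derivative_C, Polynomial.derivative_C_mul_X,
          zero_add]
      rw [hdv, Polynomial.eval_C, eval_aeval]
      have : (fun k => Polynomial.eval 0 (v k)) = u := by
        funext k
        simp only [hv, Polynomial.eval_add, Polynomial.eval_mul, Polynomial.eval_C,
          Polynomial.eval_X, mul_zero, add_zero]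
      rw [this, aeval_real]
      ring
    simp_rw [hterm]
    rw [Finset.sum_eq_single i]
    · simp
    · intro j _ hji
      simp [Ne.symm hji]
    · simp
  rw [hderiv] at hd
  exact hd

theorem sum_sq_identity' {α : Type*} [CommSemiring α] {ι κ : Type*} [Fintype ι] [Fintype κ]
    (A : ι → κ → α) :
    ∑ i, ∑ j, ∑ k, A j k * A i k = ∑ k : κ, (∑ i, A i k) ^ 2 := by
  have rhs1 : ∀ k : κ, (∑ i, A i k) ^ 2 = ∑ i, ∑ j, A j k * A i k := by
    intro k
    rw [sq, Finset.sum_mul_sum]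
    refine Finset.sum_congr rfl fun i _ => Finset.sum_congr rfl fun j _ => mul_comm _ _
  simp_rw [rhs1]
  have s1 : ∀ i : ι, (∑ j : ι, ∑ k : κ, A j k * A i k) = ∑ k : κ, ∑ j : ι, A j k * A i k :=
    fun i => Finset.sum_comm
  simp_rw [s1]
  exact Finset.sum_comm

def PolySq (q : Polynomial (MvPolynomial (Fin n) ℝ)) : Prop :=
  ∃ (k : ℕ) (Q : Fin k → Polynomial (MvPolynomial (Fin n) ℝ)), q = ∑ s, Q s ^ 2

theorem polySq_zero : PolySq (0 : Polynomial (MvPolynomial (Fin n) ℝ)) :=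
  ⟨0, fun _ => 0, by simp⟩

theorem polySq_add {q1 q2 : Polynomial (MvPolynomial (Fin n) ℝ)}
    (h1 : PolySq q1) (h2 : PolySq q2) : PolySq (q1 + q2) := by
  obtain ⟨k1, Q1, hQ1⟩ := h1
  obtain ⟨k2, Q2, hQ2⟩ := h2
  refine ⟨k1 + k2, fun s => Fin.addCases Q1 Q2 s, ?_⟩
  rw [Fin.sum_univ_add]
  simp only [Fin.addCases_left, Fin.addCases_right]
  rw [hQ1, hQ2]

theorem polySq_sum {ι : Type*} (t : Finset ι) (f : ι → Polynomial (MvPolynomial (Fin n) ℝ))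
    (h : ∀ i ∈ t, PolySq (f i)) : PolySq (∑ i ∈ t, f i) := by
  classical
  induction t using Finset.induction_on with
  | empty => simpa using polySq_zero
  | insert _ _ hx ih =>
      rename_i a t
      rw [Finset.sum_insert hx]
      exact polySq_add (h a (Finset.mem_insert_self a t))
        (ih fun i hi => h i (Finset.mem_insert_of_mem hi))

theorem polySq_C_mul {q : Polynomial (MvPolynomial (Fin n) ℝ)} (c : ℝ) (hc : 0 ≤ c)
    (h : PolySq q) : PolySq (Polynomial.C (MvPolynomial.C c) * q) := by
  obtain ⟨k, Q, hQ⟩ := h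
  refine ⟨k, fun s => Polynomial.C (MvPolynomial.C (Real.sqrt c)) * Q s, ?_⟩
  rw [hQ, Finset.mul_sum]
  refine Finset.sum_congr rfl fun s _ => ?_
  rw [mul_pow, ← Polynomial.C_pow, ← MvPolynomial.C_pow, sq (Real.sqrt c),
    Real.mul_self_sqrt hc]

def lineA (u : Fin n → ℝ) : Fin n → Polynomial (MvPolynomial (Fin n) ℝ) :=
  fun i => Polynomial.C (MvPolynomial.C (u i))
    + Polynomial.C (MvPolynomial.X i - MvPolynomial.C (u i)) * Polynomial.X

theorem deriv_lineA (u : Fin n → ℝ) (i : Fin n) :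
    Polynomial.derivative (lineA u i)
      = Polynomial.C (MvPolynomial.X i - MvPolynomial.C (u i)) := by
  unfold lineA
  rw [Polynomial.derivative_add, Polynomial.derivative_C, Polynomial.derivative_C_mul_X, zero_add]

theorem lineA_eval_one (u : Fin n → ℝ) (p : MvPolynomial (Fin n) ℝ) :
    Polynomial.eval 1 (MvPolynomial.aeval (lineA u) p) = p := by
  rw [eval_aeval]
  have : (fun i => Polynomial.eval 1 (lineA u i)) = MvPolynomial.X := by
    funext i
    simp only [lineA, Polynomial.eval_add, Polynomial.eval_C, Polynomial.eval_mul,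
      Polynomial.eval_X, mul_one]
    ring
  rw [this, MvPolynomial.aeval_X_left_apply]

theorem aeval_C_comp (u : Fin n → ℝ) (p : MvPolynomial (Fin n) ℝ) :
    MvPolynomial.aeval (fun i => (MvPolynomial.C (u i) : MvPolynomial (Fin n) ℝ)) p
      = MvPolynomial.C (eval u p) := by
  induction p using MvPolynomial.induction_on with
  | C a => simp [MvPolynomial.algebraMap_eq]
  | add p q hp hq => rw [map_add, hp, hq, map_add, MvPolynomial.C_add]
  | mul_X p i hp =>
      rw [_root_.map_mul, _root_.map_mul, MvPolynomial.aeval_X, hp, MvPolynomial.eval_X,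
        MvPolynomial.C_mul]

theorem lineA_eval_zero (u : Fin n → ℝ) (p : MvPolynomial (Fin n) ℝ) :
    Polynomial.eval 0 (MvPolynomial.aeval (lineA u) p) = MvPolynomial.C (eval u p) := by
  rw [eval_aeval]
  have : (fun i => Polynomial.eval 0 (lineA u i))
      = fun i => (MvPolynomial.C (u i) : MvPolynomial (Fin n) ℝ) := by
    funext i
    simp [lineA]
  rw [this, aeval_C_comp]

theorem polySq_dd_of_sosConvex (p : MvPolynomial (Fin n) ℝ) (hp : IsSOSConvex p)
    (u : Fin n → ℝ) :
    PolySq (Polynomial.derivative (Polynomial.derivative (MvPolynomial.aeval (lineA u) p))) := by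
  obtain ⟨s, L, hL⟩ := hp
  have hHess : ∀ i j : Fin n, pderiv j (pderiv i p) = ∑ k, L j k * L i k := by
    intro i j
    have := congrFun (congrFun hL j) i
    simp only [Matrix.of_apply] at this
    rw [this, Matrix.mul_apply]
    rfl
  have hd1 : Polynomial.derivative (MvPolynomial.aeval (lineA u) p)
      = ∑ i, MvPolynomial.aeval (lineA u) (pderiv i p)
          * Polynomial.C (MvPolynomial.X i - MvPolynomial.C (u i)) := by
    rw [deriv_aeval]
    simp_rw [deriv_lineA]
  have hd2 : Polynomial.derivative (Polynomial.derivative (MvPolynomial.aeval (lineA u) p))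
      = ∑ i, ∑ j, MvPolynomial.aeval (lineA u) (pderiv j (pderiv i p))
          * Polynomial.C (MvPolynomial.X j - MvPolynomial.C (u j))
          * Polynomial.C (MvPolynomial.X i - MvPolynomial.C (u i)) := by
    rw [hd1, map_sum]
    refine Finset.sum_congr rfl fun i _ => ?_
    rw [Polynomial.derivative_mul, Polynomial.derivative_C, mul_zero, add_zero,
      deriv_aeval, Finset.sum_mul]
    refine Finset.sum_congr rfl fun j _ => ?_
    rw [deriv_lineA]
  refine ⟨s, fun k => ∑ i, MvPolynomial.aeval (lineA u) (L i k)
      * Polynomial.C (MvPolynomial.X i - MvPolynomial.C (u i)), ?_⟩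
  rw [hd2]
  simp_rw [hHess]
  have lhs1 : ∀ i : Fin n, (∑ j, MvPolynomial.aeval (lineA u) (∑ k, L j k * L i k)
        * Polynomial.C (MvPolynomial.X j - MvPolynomial.C (u j))
        * Polynomial.C (MvPolynomial.X i - MvPolynomial.C (u i)))
      = ∑ j, ∑ k, (MvPolynomial.aeval (lineA u) (L j k)
            * Polynomial.C (MvPolynomial.X j - MvPolynomial.C (u j)))
          * (MvPolynomial.aeval (lineA u) (L i k)
            * Polynomial.C (MvPolynomial.X i - MvPolynomial.C (u i))) := by
    intro i
    refine Finset.sum_congr rfl fun j _ => ?_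
    rw [map_sum, Finset.sum_mul, Finset.sum_mul]
    refine Finset.sum_congr rfl fun k _ => ?_
    rw [_root_.map_mul]
    ring
  simp_rw [lhs1]
  exact sum_sq_identity' (fun i k => MvPolynomial.aeval (lineA u) (L i k)
    * Polynomial.C (MvPolynomial.X i - MvPolynomial.C (u i)))

theorem isSOS_zero : IsSOS (0 : MvPolynomial (Fin n) ℝ) := ⟨0, fun _ => 0, by simp⟩

theorem isSOS_add {p q : MvPolynomial (Fin n) ℝ} (hp : IsSOS p) (hq : IsSOS q) :
    IsSOS (p + q) := by
  obtain ⟨k1, Q1, hQ1⟩ := hp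
  obtain ⟨k2, Q2, hQ2⟩ := hq
  refine ⟨k1 + k2, fun s => Fin.addCases Q1 Q2 s, ?_⟩
  rw [Fin.sum_univ_add]
  simp only [Fin.addCases_left, Fin.addCases_right]
  rw [hQ1, hQ2]

theorem isSOS_sum {ι : Type*} (t : Finset ι) (f : ι → MvPolynomial (Fin n) ℝ)
    (h : ∀ i ∈ t, IsSOS (f i)) : IsSOS (∑ i ∈ t, f i) := by
  classical
  induction t using Finset.induction_on with
  | empty => simpa using isSOS_zero
  | insert _ _ hx ih =>
      rename_i a t
      rw [Finset.sum_insert hx]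
      exact isSOS_add (h a (Finset.mem_insert_self a t))
        (ih fun i hi => h i (Finset.mem_insert_of_mem hi))

theorem helton_nie (σ₀ : MvPolynomial (Fin n) ℝ) (u : Fin n → ℝ)
    (h0 : eval u σ₀ = 0) (hgrad : ∀ i, eval u (pderiv i σ₀) = 0)
    (hsq : PolySq (Polynomial.derivative (Polynomial.derivative (MvPolynomial.aeval (lineA u) σ₀)))) :
    IsSOS σ₀ := by
  obtain ⟨k, Q, hQ⟩ := hsq
  have htay := taylor_id (MvPolynomial.aeval (lineA u) σ₀)
  rw [lineA_eval_one, lineA_eval_zero, h0, MvPolynomial.C_0] at htay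
  have hd0 : Polynomial.eval 0 (Polynomial.derivative (MvPolynomial.aeval (lineA u) σ₀)) = 0 := by
    rw [deriv_aeval, Polynomial.eval_finset_sum]
    apply Finset.sum_eq_zero
    intro i _
    rw [Polynomial.eval_mul, deriv_lineA, Polynomial.eval_C, lineA_eval_zero, hgrad i,
      MvPolynomial.C_0, zero_mul]
  rw [hd0, zero_add, zero_add] at htay
  rw [htay, hQ, Finset.mul_sum, itg_sum]
  exact isSOS_sum _ _ fun s _ => isSOS_itg_sq (Q s)

end

/-- if Slater's condition holds, `f` attains its infimum `f*` on `K` at some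
`x* ∈ K`, `f` is SOS-convex and each `−gⱼ` is SOS-convex, then
`f − f* = σ₀ + Σⱼ λⱼ gⱼ` for some convex SOS `σ₀` and scalars `λⱼ ≥ 0`. -/

theorem stmt_9 (n m : ℕ) (g : Fin m → MvPolynomial (Fin n) ℝ)
    (K : Set (Fin n → ℝ)) (hK : K = {x | ∀ j, 0 ≤ eval x (g j)})
    (slater : ∃ x₀ : Fin n → ℝ, ∀ j, 0 < eval x₀ (g j))
    (f : MvPolynomial (Fin n) ℝ) (hf : IsSOSConvex f)
    (hg : ∀ j, IsSOSConvex (-(g j)))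
    (fstar : ℝ) (xstar : Fin n → ℝ) (hxK : xstar ∈ K)
    (hfx : eval xstar f = fstar) (hmin : ∀ x ∈ K, fstar ≤ eval x f) :
    ∃ (σ₀ : MvPolynomial (Fin n) ℝ) (lam : Fin m → ℝ),
      IsSOS σ₀ ∧ (ConvexOn ℝ Set.univ fun x => eval x σ₀) ∧ (∀ j, 0 ≤ lam j) ∧
      f - C fstar = σ₀ + ∑ j, C (lam j) * g j := by
  classical
  obtain ⟨x₀, hx₀⟩ := slater
  set F : (Fin n → ℝ) → ℝ := fun x => eval x f with hF
  set G : Fin m → (Fin n → ℝ) → ℝ := fun j x => eval x (g j) with hG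
  have hFconv : ConvexOn ℝ Set.univ F := convexOn_eval_of_sosConvex f hf
  have hGneg : ∀ j, ConvexOn ℝ Set.univ (fun x => -(G j x)) := by
    intro j
    have h1 := convexOn_eval_of_sosConvex _ (hg j)
    have h2 : (fun x => eval x (-(g j))) = (fun x => -(G j x)) := by
      funext x; simp [hG]
    rw [h2] at h1
    exact h1
  have hGconc : ∀ j, ConcaveOn ℝ Set.univ (G j) := by
    intro j
    have := hGneg j
    have h3 : (fun x => -(G j x)) = -(G j) := by funext x; rfl
    rw [h3] at this
    exact neg_convexOn_iff.mp this
  have hxK' : ∀ j, 0 ≤ G j xstar := by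
    rw [hK] at hxK; exact hxK
  have hmin' : ∀ x, (∀ j, 0 ≤ G j x) → fstar ≤ F x := by
    intro x hx
    exact hmin x (by rw [hK]; exact hx)
  obtain ⟨lam, hlam0, hlam⟩ :=
    lagrange_multipliers G F hGconc hFconv x₀ hx₀ fstar xstar hxK' hfx hmin'
  set σ₀ : MvPolynomial (Fin n) ℝ := f - C fstar + ∑ j, C (lam j) * (-(g j)) with hσ
  have hevalσ : ∀ x, eval x σ₀ = F x - fstar - ∑ j, lam j * G j x := by
    intro x
    rw [hσ, map_add, map_sub, map_sum]
    simp only [eval_C, _root_.map_mul, map_neg]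
    rw [sub_eq_add_neg (F x - fstar), ← Finset.sum_neg_distrib]
    congr 1
    refine Finset.sum_congr rfl fun j _ => ?_
    simp [hG]
  have hσnonneg : ∀ x, 0 ≤ eval x σ₀ := by
    intro x
    rw [hevalσ]
    have := hlam x
    linarith
  have hfxF : F xstar = fstar := hfx
  have hσstar : eval xstar σ₀ = 0 := by
    rw [hevalσ, hfxF]
    have h1 : ∑ j, lam j * G j xstar ≤ 0 := by
      have := hlam xstar; rw [hfxF] at this; linarith
    have h2 : 0 ≤ ∑ j, lam j * G j xstar :=
      Finset.sum_nonneg fun j _ => mul_nonneg (hlam0 j) (hxK' j)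
    linarith
  have hgrad : ∀ i, eval xstar (pderiv i σ₀) = 0 := by
    intro i
    apply pderiv_eval_zero_of_min σ₀ xstar
    intro x
    rw [hσstar]
    exact hσnonneg x
  have hsq : PolySq (Polynomial.derivative (Polynomial.derivative (MvPolynomial.aeval (lineA xstar) σ₀))) := by
    have e : MvPolynomial.aeval (lineA xstar) σ₀
        = (MvPolynomial.aeval (lineA xstar) f - Polynomial.C (MvPolynomial.C fstar))
          + ∑ j, Polynomial.C (MvPolynomial.C (lam j))
              * MvPolynomial.aeval (lineA xstar) (-(g j)) := by
      have hAC : ∀ c : ℝ, MvPolynomial.aeval (lineA xstar) (MvPolynomial.C c)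
          = Polynomial.C (MvPolynomial.C c) := by
        intro c
        rw [MvPolynomial.aeval_C, Polynomial.algebraMap_apply, MvPolynomial.algebraMap_eq]
      rw [hσ, map_add, map_sub, map_sum, hAC]
      congr 1
      refine Finset.sum_congr rfl fun j _ => ?_
      rw [_root_.map_mul, hAC]
    rw [e]
    rw [Polynomial.derivative_add, Polynomial.derivative_sub, Polynomial.derivative_C,
      sub_zero, Polynomial.derivative_sum]
    rw [Polynomial.derivative_add, Polynomial.derivative_sum]
    have eterm : ∀ j : Fin m, Polynomial.derivative (Polynomial.derivative (Polynomial.C (MvPolynomial.C (lam j))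
          * MvPolynomial.aeval (lineA xstar) (-(g j))))
        = Polynomial.C (MvPolynomial.C (lam j))
          * Polynomial.derivative (Polynomial.derivative (MvPolynomial.aeval (lineA xstar) (-(g j)))) := by
      intro j
      rw [Polynomial.derivative_mul, Polynomial.derivative_C, zero_mul, zero_add,
        Polynomial.derivative_mul, Polynomial.derivative_C, zero_mul, zero_add]
    simp_rw [eterm]
    refine polySq_add (polySq_dd_of_sosConvex f hf xstar)
      (polySq_sum _ _ fun j _ => polySq_C_mul (lam j) (hlam0 j)
        (polySq_dd_of_sosConvex _ (hg j) xstar))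
  have hSOS : IsSOS σ₀ := helton_nie σ₀ xstar hσstar hgrad hsq
  refine ⟨σ₀, lam, hSOS, ?_, hlam0, ?_⟩
  · have hfun : (fun x => eval x σ₀)
        = fun x => (F x + ∑ j, lam j • (-(G j x))) - fstar := by
      funext x
      rw [hevalσ]
      simp only [smul_eq_mul, mul_neg]
      rw [Finset.sum_neg_distrib]
      ring
    rw [hfun]
    apply ConvexOn.sub ?_ (concaveOn_const _ convex_univ)
    have hsum : ConvexOn ℝ Set.univ (fun x => ∑ j, lam j • (-(G j x))) := by
      have : ∀ (t : Finset (Fin m)), ConvexOn ℝ Set.univ (fun x => ∑ j ∈ t, lam j • (-(G j x))) := by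
        intro t
        induction t using Finset.induction_on with
        | empty => simpa using convexOn_const (0:ℝ) convex_univ
        | insert _ _ hx ih =>
            rename_i a t
            have h1 : (fun x => ∑ j ∈ insert a t, lam j • (-(G j x)))
                = fun x => lam a • (-(G a x)) + ∑ j ∈ t, lam j • (-(G j x)) := by
              funext x; rw [Finset.sum_insert hx]
            rw [h1]
            exact ((hGneg a).smul (hlam0 a)).add ih
      exact this Finset.univ
    exact hFconv.add hsum
  · rw [hσ]
    rw [add_assoc, ← Finset.sum_add_distrib]
    have : ∀ j : Fin m, C (lam j) * (-(g j)) + C (lam j) * g j = 0 := by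
      intro j; ring
    simp_rw [this]
    simp
end

section
/- Let g₁,…,gₘ ∈ ℝ[X₁,…,Xₙ], K := {x ∈ ℝⁿ : gⱼ(x) ≥ 0, j = 1,…,m}, assume Slater's condition holds, and let f ∈ ℝ[X₁,…,Xₙ] attain its infimum f* := inf{f(x) : x ∈ K} at some point of K. Suppose f is SOS-convex, −gⱼ is SOS-convex for every j, and d := max(⌈deg f/2⌉, maxⱼ ⌈deg gⱼ/2⌉). Then for every linear functional L on the polynomials of degree at most 2d with L(1) = 1, L(σ) ≥ 0 for every SOS polynomial σ of degree at most 2d, and L(gⱼ) ≥ 0 for all j, the point x* := (L(X₁),…,L(Xₙ)) belongs to K and f* ≤ f(x*) ≤ L(f); consequently the infimum of L(f) over all such L equals f*. -/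
open MvPolynomial Matrix

variable {n : ℕ}

lemma totalDegree_pderiv_le (i : Fin n) (p : MvPolynomial (Fin n) ℝ) :
    (pderiv i p).totalDegree ≤ p.totalDegree - 1 := by
  conv_lhs => rw [p.as_sum, map_sum]
  refine (totalDegree_finset_sum _ _).trans (Finset.sup_le fun α hα => ?_)
  rw [pderiv_monomial]
  by_cases h : α i = 0
  · simp [h]
  · refine (totalDegree_monomial_le _ _).trans ?_
    show ((α - Finsupp.single i 1).sum fun _ e => e) ≤ p.totalDegree - 1
    have hα' : α - Finsupp.single i 1 + Finsupp.single i 1 = α := by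
      ext x
      by_cases hx : x = i
      · subst hx; simp; omega
      · simp [Finsupp.single_apply, Ne.symm hx]
    have hs : ((α - Finsupp.single i 1).sum fun _ e => e) + 1 = α.sum fun _ e => e := by
      conv_rhs => rw [← hα']
      rw [Finsupp.sum_add_index' (fun _ => rfl) (fun _ _ _ => rfl)]
      simp
    have := le_totalDegree hα
    omega

/-- coefficient of a sum of squares at twice a degree bound -/
lemma coeff_sum_sq {k : ℕ} (φ : Fin k → Polynomial ℝ) (D : ℕ)
    (hD : ∀ j, (φ j).natDegree ≤ D) :
    (∑ j, φ j ^ 2).coeff (2 * D) = ∑ j, ((φ j).coeff D) ^ 2 := by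
  rw [Polynomial.finset_sum_coeff]
  refine Finset.sum_congr rfl fun j _ => ?_
  rw [sq, Polynomial.coeff_mul, sq]
  rw [Finset.sum_eq_single (D, D)]
  · intro b hb hne
    have h : b.1 + b.2 = 2 * D := Finset.HasAntidiagonal.mem_antidiagonal.mp hb
    rcases lt_or_ge D b.1 with h1 | h1
    · rw [Polynomial.coeff_eq_zero_of_natDegree_lt (lt_of_le_of_lt (hD j) h1), zero_mul]
    · have h2 : D < b.2 ∨ (b.1 = D ∧ b.2 = D) := by omega
      rcases h2 with h2 | h2
      · rw [Polynomial.coeff_eq_zero_of_natDegree_lt (lt_of_le_of_lt (hD j) h2), mul_zero]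
      · exact absurd (Prod.ext_iff.mpr ⟨h2.1, h2.2⟩) hne
  · intro h; exact absurd (Finset.HasAntidiagonal.mem_antidiagonal.mpr (by ring)) h

/-- restriction of a multivariate polynomial to the line `t ↦ t • x`. -/
noncomputable def lineP (x : Fin n → ℝ) : MvPolynomial (Fin n) ℝ →ₐ[ℝ] Polynomial ℝ :=
  aeval (fun i => Polynomial.C (x i) * Polynomial.X)

lemma coeff_lineP (x : Fin n → ℝ) (p : MvPolynomial (Fin n) ℝ) (j : ℕ) :
    (lineP x p).coeff j = eval x (homogeneousComponent j p) := by
  induction p using MvPolynomial.induction_on' with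
  | monomial u a =>
    rw [lineP, aeval_monomial]
    have hprod : (u.prod fun i k => (Polynomial.C (x i) * Polynomial.X) ^ k)
        = Polynomial.C (u.prod fun i k => x i ^ k) * Polynomial.X ^ (u.sum fun _ k => k) := by
      rw [Finsupp.prod, Finsupp.prod, Finsupp.sum]
      simp_rw [mul_pow]
      rw [Finset.prod_mul_distrib, Finset.prod_pow_eq_pow_sum]
      congr 1
      simp [map_prod, map_pow]
    rw [hprod, Polynomial.algebraMap_eq, ← mul_assoc, ← Polynomial.C_mul,
      Polynomial.coeff_C_mul, Polynomial.coeff_X_pow]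
    have hcomp : homogeneousComponent j (monomial u a)
        = if (u.sum fun _ k => k) = j then monomial u a else 0 := by
      have hdeg : ∀ β : Fin n →₀ ℕ, β.degree = β.sum fun _ k => k := fun β => rfl
      ext β
      rw [coeff_homogeneousComponent, apply_ite (coeff β), coeff_zero]
      by_cases hb : u = β
      · subst hb; rw [hdeg]
      · rw [coeff_monomial, if_neg hb]; simp
    rw [hcomp]
    by_cases h : (u.sum fun _ k => k) = j
    · rw [if_pos h, if_pos h.symm, eval_monomial, mul_one]
    · rw [if_neg h, if_neg (fun hh => h hh.symm), mul_zero, map_zero]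
  | add p q hp hq =>
    rw [map_add, Polynomial.coeff_add, hp, hq, map_add, map_add]

lemma natDegree_lineP_le (x : Fin n → ℝ) (p : MvPolynomial (Fin n) ℝ) :
    (lineP x p).natDegree ≤ p.totalDegree := by
  refine Polynomial.natDegree_le_iff_coeff_eq_zero.mpr fun j hj => ?_
  rw [coeff_lineP, homogeneousComponent_eq_zero _ _ hj, map_zero]

lemma exists_lineP_natDegree_eq (p : MvPolynomial (Fin n) ℝ) (hp : p ≠ 0) :
    ∃ x : Fin n → ℝ, (lineP x p).natDegree = p.totalDegree := by
  have hsupp : p.support.Nonempty := support_nonempty.mpr hp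
  obtain ⟨α, hα, hαs⟩ := Finset.exists_mem_eq_sup p.support hsupp (fun β => β.sum fun _ e => e)
  have hcomp : homogeneousComponent p.totalDegree p ≠ 0 := by
    intro h
    have := coeff_homogeneousComponent (n := p.totalDegree) (φ := p) α
    rw [h, coeff_zero] at this
    have hdeg : α.degree = p.totalDegree := by
      rw [totalDegree, hαs]; rfl
    rw [if_pos hdeg] at this
    exact (mem_support_iff.mp hα) this.symm
  have : ¬ ∀ x : Fin n → ℝ, eval x (homogeneousComponent p.totalDegree p) = 0 := by
    intro h
    exact hcomp (MvPolynomial.funext fun x => by rw [h x, map_zero])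
  push_neg at this
  obtain ⟨x, hx⟩ := this
  refine ⟨x, le_antisymm (natDegree_lineP_le x p) ?_⟩
  exact Polynomial.le_natDegree_of_ne_zero (by rwa [coeff_lineP])

/-- no cancellation of degrees in a sum of squares over ℝ -/
lemma totalDegree_sq_le_sum_sq {k : ℕ} (q : Fin k → MvPolynomial (Fin n) ℝ) (i : Fin k) :
    2 * (q i).totalDegree ≤ (∑ j, q j ^ 2).totalDegree := by
  by_cases hqi : q i = 0
  · simp [hqi]
  obtain ⟨x, hx⟩ := exists_lineP_natDegree_eq (q i) hqi
  set φ : Fin k → Polynomial ℝ := fun j => lineP x (q j) with hφ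
  set D : ℕ := Finset.univ.sup fun j => (φ j).natDegree with hD
  have hDle : ∀ j, (φ j).natDegree ≤ D := fun j => Finset.le_sup (f := fun j => (φ j).natDegree) (Finset.mem_univ j)
  by_cases hd0 : (q i).totalDegree = 0
  · simp [hd0]
  have hD1 : 1 ≤ D := le_trans (by omega) (hx ▸ hDle i)
  obtain ⟨j₀, _, hj₀⟩ := Finset.exists_mem_eq_sup (Finset.univ : Finset (Fin k))
    ⟨i, Finset.mem_univ i⟩ (fun j => (φ j).natDegree)
  rw [← hD] at hj₀
  have hφj₀ : φ j₀ ≠ 0 := by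
    intro h
    rw [h, Polynomial.natDegree_zero] at hj₀
    omega
  have hkey : (∑ j, φ j ^ 2).coeff (2 * D) ≠ 0 := by
    rw [coeff_sum_sq φ D hDle]
    have hc : (φ j₀).coeff D ≠ 0 := by
      rw [hj₀]; exact Polynomial.leadingCoeff_ne_zero.mpr hφj₀
    exact ne_of_gt (Finset.sum_pos' (fun j _ => sq_nonneg _)
      ⟨j₀, Finset.mem_univ j₀, by positivity⟩)
  have hsum : (∑ j, φ j ^ 2) = lineP x (∑ j, q j ^ 2) := by
    rw [map_sum]; exact Finset.sum_congr rfl fun j _ => by rw [map_pow]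
  calc 2 * (q i).totalDegree = 2 * (φ i).natDegree := by rw [hφ, hx]
    _ ≤ 2 * D := by have := hDle i; omega
    _ ≤ (∑ j, φ j ^ 2).natDegree := Polynomial.le_natDegree_of_ne_zero hkey
    _ ≤ (∑ j, q j ^ 2).totalDegree := hsum ▸ natDegree_lineP_le x _

/-- The positive linear functional `ψ ↦ ∫₀¹ (1-t) ψ(t) dt`. -/
noncomputable def II (ψ : Polynomial ℝ) : ℝ := ∫ t in (0:ℝ)..1, (1 - t) * ψ.eval t

lemma II_intble (ψ : Polynomial ℝ) :
    IntervalIntegrable (fun t => (1 - t) * ψ.eval t) MeasureTheory.volume 0 1 :=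
  (Continuous.mul (by continuity) ψ.continuous).intervalIntegrable _ _

lemma II_sq_nonneg (ψ : Polynomial ℝ) : 0 ≤ II (ψ ^ 2) := by
  refine intervalIntegral.integral_nonneg zero_le_one fun u hu => ?_
  rw [Polynomial.eval_pow]
  have h1 : (0:ℝ) ≤ 1 - u := by linarith [hu.2]
  positivity

lemma II_sum {ι : Type*} (s : Finset ι) (ψ : ι → Polynomial ℝ) :
    II (∑ j ∈ s, ψ j) = ∑ j ∈ s, II (ψ j) := by
  unfold II
  rw [← intervalIntegral.integral_finset_sum (fun j _ => II_intble (ψ j))]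
  congr 1; ext t
  rw [Polynomial.eval_finset_sum, Finset.mul_sum]

lemma II_smul (a : ℝ) (ψ : Polynomial ℝ) : II (a • ψ) = a * II ψ := by
  unfold II
  rw [← intervalIntegral.integral_const_mul]
  congr 1; ext t
  rw [Polynomial.eval_smul, smul_eq_mul]; ring

lemma II_taylor (Φ : Polynomial ℝ) :
    II (Polynomial.derivative (Polynomial.derivative Φ)) =
      Φ.eval 1 - Φ.eval 0 - (Polynomial.derivative Φ).eval 0 := by
  have key : ∀ t ∈ Set.uIcc (0:ℝ) 1, HasDerivAt
      (fun u => (1 - u) * (Polynomial.derivative Φ).eval u + Φ.eval u)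
      ((1 - t) * (Polynomial.derivative (Polynomial.derivative Φ)).eval t) t := by
    intro t _
    have h1 : HasDerivAt (fun u : ℝ => (1 - u)) (-1) t := by
      simpa using (hasDerivAt_id t).const_sub 1
    have h2 := (Polynomial.derivative Φ).hasDerivAt t
    have h3 := Φ.hasDerivAt t
    have := (h1.mul h2).add h3
    refine this.congr_deriv ?_
    ring
  have := intervalIntegral.integral_eq_sub_of_hasDerivAt key (II_intble _)
  unfold II
  rw [this]
  simp
  ring

lemma derivative_aeval (σ : Fin n → Polynomial ℝ) (p : MvPolynomial (Fin n) ℝ) :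
    Polynomial.derivative (aeval σ p) =
      ∑ i, aeval σ (pderiv i p) * Polynomial.derivative (σ i) := by
  induction p using MvPolynomial.induction_on with
  | C a => simp
  | add p q hp hq => simp [map_add, hp, hq, Finset.sum_add_distrib, add_mul]
  | mul_X p j hp =>
    have hR : ∀ i : Fin n, aeval σ (pderiv i (p * X j)) * Polynomial.derivative (σ i)
        = (aeval σ (pderiv i p) * Polynomial.derivative (σ i)) * σ j
          + aeval σ (p * pderiv i (X j)) * Polynomial.derivative (σ i) := by
      intro i
      rw [pderiv_mul, map_add, _root_.map_mul, _root_.map_mul, aeval_X, add_mul]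
      ring
    rw [_root_.map_mul, aeval_X, Polynomial.derivative_mul, hp]
    rw [Finset.sum_congr rfl fun i _ => hR i, Finset.sum_add_distrib, ← Finset.sum_mul]
    congr 1
    rw [Finset.sum_eq_single j]
    · rw [pderiv_X_self]; simp [mul_comm]
    · intro b _ hb
      rw [pderiv_X_of_ne (Ne.symm hb)]
      simp
    · intro h; exact absurd (Finset.mem_univ j) h

lemma eval_aeval' (σ : Fin n → Polynomial ℝ) (t : ℝ) (p : MvPolynomial (Fin n) ℝ) :
    (aeval σ p).eval t = eval (fun i => (σ i).eval t) p := by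
  induction p using MvPolynomial.induction_on with
  | C a => simp
  | add p q hp hq => simp [hp, hq]
  | mul_X p j hp => simp [hp]

lemma map_aeval_poly (x : Fin n → ℝ)
    (G : Fin n → Polynomial (MvPolynomial (Fin n) ℝ)) (u : MvPolynomial (Fin n) ℝ) :
    Polynomial.map (eval x) (aeval G u) = aeval (fun i => Polynomial.map (eval x) (G i)) u := by
  induction u using MvPolynomial.induction_on with
  | C a => simp [MvPolynomial.algebraMap_eq]
  | add p q hp hq => simp [hp, hq]
  | mul_X p j hp => simp [hp]

section CoeffDeg

lemma coeffDeg_mul (P Q : Polynomial (MvPolynomial (Fin n) ℝ)) (D E : ℕ)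
    (hP : ∀ j, (P.coeff j).totalDegree ≤ D) (hQ : ∀ j, (Q.coeff j).totalDegree ≤ E) :
    ∀ j, ((P * Q).coeff j).totalDegree ≤ D + E := by
  intro j
  rw [Polynomial.coeff_mul]
  refine (totalDegree_finset_sum _ _).trans (Finset.sup_le fun ab _ => ?_)
  exact (totalDegree_mul _ _).trans (add_le_add (hP _) (hQ _))

lemma coeffDeg_prod {ι : Type*} (s : Finset ι) (P : ι → Polynomial (MvPolynomial (Fin n) ℝ))
    (D : ι → ℕ) (h : ∀ i ∈ s, ∀ j, ((P i).coeff j).totalDegree ≤ D i) :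
    ∀ j, ((∏ i ∈ s, P i).coeff j).totalDegree ≤ ∑ i ∈ s, D i := by
  classical
  induction s using Finset.induction_on with
  | empty =>
    intro j
    rcases eq_or_ne j 0 with rfl | hj
    · simp
    · simp [Polynomial.coeff_one, hj]
  | insert _ _ hnotmem ih =>
    rename_i a s
    rw [Finset.prod_insert hnotmem, Finset.sum_insert hnotmem]
    exact coeffDeg_mul _ _ _ _ (h a (Finset.mem_insert_self a s))
      (ih fun i hi => h i (Finset.mem_insert_of_mem hi))

lemma coeffDeg_pow (P : Polynomial (MvPolynomial (Fin n) ℝ)) (D : ℕ)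
    (hP : ∀ j, (P.coeff j).totalDegree ≤ D) (e : ℕ) :
    ∀ j, ((P ^ e).coeff j).totalDegree ≤ e * D := by
  induction e with
  | zero =>
    intro j
    rcases eq_or_ne j 0 with rfl | hj
    · simp
    · simp [Polynomial.coeff_one, hj]
  | succ e ih =>
    rw [pow_succ]
    have := coeffDeg_mul _ _ _ _ ih hP
    intro j
    exact (this j).trans (by ring_nf; omega)

end CoeffDeg

/-- The substitution `Xᵢ ↦ aᵢ + t (Xᵢ - aᵢ)` into `Polynomial (MvPolynomial)`. -/
noncomputable def genP (a : Fin n → ℝ) (i : Fin n) : Polynomial (MvPolynomial (Fin n) ℝ) :=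
  Polynomial.C (C (a i)) + Polynomial.X * Polynomial.C (X i - C (a i))

lemma coeffDeg_genP (a : Fin n → ℝ) (i : Fin n) :
    ∀ j, (((genP a i)).coeff j).totalDegree ≤ 1 := by
  intro j
  match j with
  | 0 => simp [genP]
  | 1 =>
    have : (genP a i).coeff 1 = X i - C (a i) := by
      simp [genP, Polynomial.coeff_X_mul]
    rw [this]
    refine (totalDegree_sub_C_le _ _).trans ?_
    simp [totalDegree_X]
  | (j+2) =>
    have : (genP a i).coeff (j+2) = 0 := by
      simp [genP, Polynomial.coeff_X_mul, Polynomial.coeff_C]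
    simp [this]

lemma coeffDeg_tau (a : Fin n → ℝ) (u : MvPolynomial (Fin n) ℝ) :
    ∀ j, ((aeval (genP a) u).coeff j).totalDegree ≤ u.totalDegree := by
  intro j
  conv_lhs => rw [u.as_sum, map_sum]
  rw [Polynomial.finset_sum_coeff]
  refine (totalDegree_finset_sum _ _).trans (Finset.sup_le fun α hα => ?_)
  rw [aeval_monomial]
  have h1 : ∀ j', ((Finsupp.prod α fun i k => genP a i ^ k).coeff j').totalDegree
      ≤ α.sum fun _ k => k := by
    rw [Finsupp.prod, Finsupp.sum]
    intro j'
    refine (coeffDeg_prod α.support _ (fun i => α i * 1)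
      (fun i _ => coeffDeg_pow _ 1 (coeffDeg_genP a i) (α i)) j').trans ?_
    simp
  have h2 : algebraMap ℝ (Polynomial (MvPolynomial (Fin n) ℝ)) (coeff α u)
      = Polynomial.C (C (coeff α u)) := rfl
  rw [h2, Polynomial.coeff_C_mul]
  refine (totalDegree_mul _ _).trans ?_
  have h3 := h1 j
  have h4 := le_totalDegree hα
  have h5 : (C (coeff α u) : MvPolynomial (Fin n) ℝ).totalDegree = 0 := totalDegree_C _
  omega

/-- extract the `x^α`-coefficient (a univariate polynomial in `t`). -/
noncomputable def coeffAt (α : Fin n →₀ ℕ) (P : Polynomial (MvPolynomial (Fin n) ℝ)) :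
    Polynomial ℝ :=
  ∑ j ∈ P.support, Polynomial.monomial j (MvPolynomial.coeff α (P.coeff j))

lemma coeff_coeffAt (α : Fin n →₀ ℕ) (P : Polynomial (MvPolynomial (Fin n) ℝ)) (j : ℕ) :
    (coeffAt α P).coeff j = MvPolynomial.coeff α (P.coeff j) := by
  rw [coeffAt, Polynomial.finset_sum_coeff]
  rw [Finset.sum_eq_single j]
  · rw [Polynomial.coeff_monomial, if_pos rfl]
  · intro b _ hb
    rw [Polynomial.coeff_monomial, if_neg hb]
  · intro hj
    rw [Polynomial.coeff_monomial, if_pos rfl, Polynomial.notMem_support_iff.mp hj]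
    simp

lemma map_eq_sum_coeffAt (x : Fin n → ℝ) (P : Polynomial (MvPolynomial (Fin n) ℝ))
    (S : Finset (Fin n →₀ ℕ)) (hS : ∀ j, (P.coeff j).support ⊆ S) :
    Polynomial.map (eval x) P = ∑ α ∈ S, (eval x (monomial α (1:ℝ))) • coeffAt α P := by
  ext j
  rw [Polynomial.coeff_map, Polynomial.finset_sum_coeff]
  simp_rw [Polynomial.coeff_smul, coeff_coeffAt, smul_eq_mul]
  rw [eval_eq]
  rw [← Finset.sum_subset (hS j) (fun α _ hα => by
    rw [notMem_support_iff.mp hα, mul_zero])]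
  refine Finset.sum_congr rfl fun α _ => ?_
  rw [eval_monomial, one_mul, Finsupp.prod]
  ring

lemma isSOSUpTo_zero (d : ℕ) : IsSOSUpTo (n := n) d 0 :=
  ⟨0, fun i => 0, fun i => by simp, by simp⟩

lemma isSOSUpTo_add {d : ℕ} {p q : MvPolynomial (Fin n) ℝ}
    (hp : IsSOSUpTo d p) (hq : IsSOSUpTo d q) : IsSOSUpTo d (p + q) := by
  obtain ⟨k1, u, hu, hup⟩ := hp
  obtain ⟨k2, v, hv, hvq⟩ := hq
  refine ⟨k1 + k2, Fin.append u v, fun i => ?_, ?_⟩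
  · induction i using Fin.addCases with
    | left i => rw [Fin.append_left]; exact hu i
    | right i => rw [Fin.append_right]; exact hv i
  · rw [Fin.sum_univ_add, hup, hvq]
    congr 1
    · exact Finset.sum_congr rfl fun i _ => by rw [Fin.append_left]
    · exact Finset.sum_congr rfl fun i _ => by rw [Fin.append_right]

lemma isSOSUpTo_single {d : ℕ} {q : MvPolynomial (Fin n) ℝ} (h : q.totalDegree ≤ d) :
    IsSOSUpTo d (q ^ 2) :=
  ⟨1, fun _ => q, fun _ => h, by simp⟩

lemma isSOSUpTo_sum {d : ℕ} {ι : Type*} (s : Finset ι) (f : ι → MvPolynomial (Fin n) ℝ)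
    (h : ∀ i ∈ s, IsSOSUpTo d (f i)) : IsSOSUpTo d (∑ i ∈ s, f i) := by
  classical
  induction s using Finset.induction_on with
  | empty => simpa using isSOSUpTo_zero d
  | insert _ _ hmem ih =>
    rename_i a s
    rw [Finset.sum_insert hmem]
    exact isSOSUpTo_add (h a (Finset.mem_insert_self a s))
      (ih fun i hi => h i (Finset.mem_insert_of_mem hi))

lemma II_quad {ι : Type*} [Fintype ι] (c : ι → Polynomial ℝ) (v : ι → ℝ) :
    II ((∑ α, v α • c α) ^ 2) = ∑ α, ∑ β, (v α * v β) * II (c α * c β) := by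
  have h : (∑ α, v α • c α) ^ 2 = ∑ α, ∑ β, (v α * v β) • (c α * c β) := by
    rw [sq, Finset.sum_mul_sum]
    refine Finset.sum_congr rfl fun α _ => Finset.sum_congr rfl fun β _ => ?_
    rw [smul_mul_smul_comm]
  rw [h, II_sum]
  refine Finset.sum_congr rfl fun α _ => ?_
  rw [II_sum]
  exact Finset.sum_congr rfl fun β _ => II_smul _ _

lemma psd_eq_ct_mul_self {ι : Type*} [Fintype ι] [DecidableEq ι] {A : Matrix ι ι ℝ}
    (hA : A.PosSemidef) : ∃ B : Matrix ι ι ℝ, A = B.conjTranspose * B := by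
  open scoped MatrixOrder in
  obtain ⟨X, hX, -, hXA⟩ := CFC.exists_sqrt_of_isSelfAdjoint_of_quasispectrumRestricts hA.isHermitian
    (QuasispectrumRestricts.nnreal_of_nonneg hA.nonneg)
  exact ⟨X, by rw [← hXA, ← star_eq_conjTranspose, hX.star_eq]⟩

lemma sosConvex_taylor_sos (d : ℕ) (hd1 : 1 ≤ d) (p : MvPolynomial (Fin n) ℝ)
    (hdeg : p.totalDegree ≤ 2 * d) (hp : IsSOSConvex p) (a : Fin n → ℝ) :
    IsSOSUpTo d (p - C (eval a p) - ∑ i, C (eval a (pderiv i p)) * (X i - C (a i))) := by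
  classical
  obtain ⟨s, Lm, hH⟩ := hp
  have hHij : ∀ i j : Fin n, pderiv i (pderiv j p) = ∑ k, Lm i k * Lm j k := by
    intro i j
    have h := congrFun (congrFun hH i) j
    simpa [Matrix.mul_apply, Matrix.transpose_apply] using h
  have hLdeg : ∀ i k, (Lm i k).totalDegree + 1 ≤ d := by
    intro i k
    have h1 : (∑ k', Lm i k' ^ 2) = pderiv i (pderiv i p) := by
      rw [hHij i i]; exact Finset.sum_congr rfl fun k' _ => sq (Lm i k')
    have h2 := totalDegree_pderiv_le i (pderiv i p)
    have h3 := totalDegree_pderiv_le i p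
    have h4 := totalDegree_sq_le_sum_sq (fun k' => Lm i k') k
    rw [h1] at h4
    omega
  set ρ : Fin s → Polynomial (MvPolynomial (Fin n) ℝ) :=
    fun k => ∑ i, Polynomial.C (X i - C (a i)) * aeval (genP a) (Lm i k) with hρ
  have hρdeg : ∀ k j, ((ρ k).coeff j).totalDegree ≤ d := by
    intro k j
    rw [hρ]
    simp only [Polynomial.finset_sum_coeff, Polynomial.coeff_C_mul]
    refine (totalDegree_finset_sum _ _).trans (Finset.sup_le fun i _ => ?_)
    refine (totalDegree_mul _ _).trans ?_
    have h5 := coeffDeg_tau a (Lm i k) j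
    have h6 : (X i - C (a i)).totalDegree ≤ 1 :=
      (totalDegree_sub_C_le _ _).trans (by simp [totalDegree_X])
    have h7 := hLdeg i k
    omega
  set S : Fin s → Finset (Fin n →₀ ℕ) :=
    fun k => (ρ k).support.biUnion (fun j => ((ρ k).coeff j).support) with hS
  have hSsub : ∀ k j, ((ρ k).coeff j).support ⊆ S k := by
    intro k j
    by_cases hj : j ∈ (ρ k).support
    · exact fun α hα => Finset.mem_biUnion.mpr ⟨j, hj, hα⟩
    · rw [Polynomial.notMem_support_iff.mp hj]; simp
  have hSdeg : ∀ k, ∀ α ∈ S k, (α.sum fun _ e => e) ≤ d := by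
    intro k α hα
    obtain ⟨j, _, hj⟩ := Finset.mem_biUnion.mp hα
    exact (le_totalDegree hj).trans (hρdeg k j)
  set M : (k : Fin s) → Matrix (S k) (S k) ℝ :=
    fun k α β => II (coeffAt α.1 (ρ k) * coeffAt β.1 (ρ k)) with hM
  have hMpsd : ∀ k, (M k).PosSemidef := by
    intro k
    refine Matrix.PosSemidef.of_dotProduct_mulVec_nonneg ?_ ?_
    · ext α β
      rw [Matrix.conjTranspose_apply]
      simp only [Matrix.conjTranspose_apply, hM, star_trivial]
      rw [mul_comm]
    · intro v
      have h7 : star v ⬝ᵥ (M k).mulVec v = ∑ α, ∑ β, (v α * v β) * M k α β := by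
        simp only [dotProduct, Matrix.mulVec, star_trivial, Pi.star_apply,
          Finset.mul_sum]
        exact Finset.sum_congr rfl fun α _ => Finset.sum_congr rfl fun β _ => by ring
      rw [h7, ← II_quad]
      exact II_sq_nonneg _
  choose B hB using fun k => psd_eq_ct_mul_self (hMpsd k)
  have hMB : ∀ k (α β : S k), M k α β = ∑ jj, B k jj α * B k jj β := by
    intro k α β
    have := congrFun (congrFun (hB k) α) β
    simpa [Matrix.mul_apply, Matrix.conjTranspose_apply, star_trivial] using this
  set q : (k : Fin s) → S k → MvPolynomial (Fin n) ℝ :=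
    fun k jj => ∑ α : S k, B k jj α • monomial α.1 (1:ℝ) with hq
  have hqdeg : ∀ k jj, (q k jj).totalDegree ≤ d := by
    intro k jj
    refine (totalDegree_finset_sum _ _).trans (Finset.sup_le fun α _ => ?_)
    exact (totalDegree_smul_le _ _).trans ((totalDegree_monomial_le _ _).trans (hSdeg k α.1 α.2))
  have key : ∀ x : Fin n → ℝ,
      eval x (p - C (eval a p) - ∑ i, C (eval a (pderiv i p)) * (X i - C (a i)))
        = eval x (∑ k, ∑ jj : S k, q k jj ^ 2) := by
    intro x
    set σx : Fin n → Polynomial ℝ :=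
      fun i => Polynomial.C (a i) + Polynomial.X * Polynomial.C (x i - a i) with hσx
    have hσeval : ∀ (t : ℝ) (u : MvPolynomial (Fin n) ℝ),
        (aeval σx u).eval t = eval (fun i => a i + t * (x i - a i)) u := by
      intro t u
      rw [eval_aeval']
      have harg : (fun i => (σx i).eval t) = fun i => a i + t * (x i - a i) := by
        funext i; simp [hσx]
      rw [harg]
    have hσd : ∀ i, Polynomial.derivative (σx i) = Polynomial.C (x i - a i) := by
      intro i; simp [hσx]
    set Φ : Polynomial ℝ := aeval σx p with hΦ
    have harg1 : (fun i => a i + (1:ℝ) * (x i - a i)) = x := funext fun i => by ring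
    have harg0 : (fun i => a i + (0:ℝ) * (x i - a i)) = a := funext fun i => by ring
    have hΦ1 : Φ.eval 1 = eval x p := by
      rw [hΦ, hσeval, harg1]
    have hΦ0 : Φ.eval 0 = eval a p := by
      rw [hΦ, hσeval, harg0]
    have hdΦ : Polynomial.derivative Φ
        = ∑ i, aeval σx (pderiv i p) * Polynomial.C (x i - a i) := by
      rw [hΦ, derivative_aeval]
      exact Finset.sum_congr rfl fun i _ => by rw [hσd]
    have hdΦ0 : (Polynomial.derivative Φ).eval 0
        = ∑ i, eval a (pderiv i p) * (x i - a i) := by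
      rw [hdΦ, Polynomial.eval_finset_sum]
      refine Finset.sum_congr rfl fun i _ => ?_
      rw [Polynomial.eval_mul, Polynomial.eval_C, hσeval, harg0]
    set ψ : Fin s → Polynomial ℝ :=
      fun k => ∑ i, Polynomial.C (x i - a i) * aeval σx (Lm i k) with hψ
    have h10 : ∀ k, ψ k ^ 2 = ∑ i, ∑ i',
        (Polynomial.C (x i' - a i') * aeval σx (Lm i' k))
          * (Polynomial.C (x i - a i) * aeval σx (Lm i k)) := by
      intro k
      rw [sq, hψ, Finset.sum_mul_sum]
      exact Finset.sum_congr rfl fun i _ => Finset.sum_congr rfl fun i' _ => by ring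
    have hd2 : Polynomial.derivative (Polynomial.derivative Φ) = ∑ k, ψ k ^ 2 := by
      rw [hdΦ, map_sum]
      have h8 : ∀ i : Fin n,
          Polynomial.derivative (aeval σx (pderiv i p) * Polynomial.C (x i - a i))
            = ∑ i', (aeval σx (pderiv i' (pderiv i p)) * Polynomial.C (x i' - a i'))
                * Polynomial.C (x i - a i) := by
        intro i
        rw [Polynomial.derivative_mul, Polynomial.derivative_C, mul_zero, add_zero,
          derivative_aeval, Finset.sum_mul]
        exact Finset.sum_congr rfl fun i' _ => by rw [hσd]
      rw [Finset.sum_congr rfl fun i _ => h8 i]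
      have h9 : ∀ i i' : Fin n, aeval σx (pderiv i' (pderiv i p))
          = ∑ k, aeval σx (Lm i' k) * aeval σx (Lm i k) := by
        intro i i'
        rw [hHij i' i, map_sum]
        exact Finset.sum_congr rfl fun k _ => by rw [_root_.map_mul]
      calc ∑ i, ∑ i', (aeval σx (pderiv i' (pderiv i p)) * Polynomial.C (x i' - a i'))
              * Polynomial.C (x i - a i)
          = ∑ i, ∑ i', ∑ k, (Polynomial.C (x i' - a i') * aeval σx (Lm i' k))
              * (Polynomial.C (x i - a i) * aeval σx (Lm i k)) := by
            refine Finset.sum_congr rfl fun i _ => Finset.sum_congr rfl fun i' _ => ?_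
            rw [h9, Finset.sum_mul, Finset.sum_mul]
            exact Finset.sum_congr rfl fun k _ => by ring
        _ = ∑ k, ∑ i, ∑ i', (Polynomial.C (x i' - a i') * aeval σx (Lm i' k))
              * (Polynomial.C (x i - a i) * aeval σx (Lm i k)) := by
            rw [Finset.sum_congr rfl fun i (_ : i ∈ Finset.univ) => Finset.sum_comm]
            exact Finset.sum_comm
        _ = ∑ k, ψ k ^ 2 := by
            refine Finset.sum_congr rfl fun k _ => ?_
            rw [h10 k]
    have hF : eval x (p - C (eval a p) - ∑ i, C (eval a (pderiv i p)) * (X i - C (a i)))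
        = II (Polynomial.derivative (Polynomial.derivative Φ)) := by
      rw [II_taylor, hΦ1, hΦ0, hdΦ0]
      simp only [map_sub, map_sum, _root_.map_mul, eval_C, eval_X]
    have hgen : ∀ i, Polynomial.map (eval x) (genP a i) = σx i := by
      intro i
      simp [genP, hσx, Polynomial.map_add, Polynomial.map_mul, Polynomial.map_C]
    have hgen' : (fun i => Polynomial.map (eval x) (genP a i)) = σx := funext hgen
    have hψmap : ∀ k, ψ k = Polynomial.map (eval x) (ρ k) := by
      intro k
      rw [hψ, hρ]
      rw [Polynomial.map_sum]
      refine Finset.sum_congr rfl fun i _ => ?_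
      rw [Polynomial.map_mul, Polynomial.map_C, map_aeval_poly, hgen']
      congr 1
      simp
    have hψsum : ∀ k, ψ k = ∑ α : S k, (eval x (monomial α.1 (1:ℝ))) • coeffAt α.1 (ρ k) := by
      intro k
      rw [hψmap k, map_eq_sum_coeffAt x (ρ k) (S k) (hSsub k)]
      exact (Finset.sum_coe_sort (S k) _).symm
    have hqeval : ∀ k jj, eval x (q k jj) = ∑ α : S k, B k jj α * eval x (monomial α.1 1) := by
      intro k jj
      rw [hq, map_sum]
      refine Finset.sum_congr rfl fun α _ => ?_
      rw [smul_eq_C_mul, _root_.map_mul, eval_C]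
    have hIIψ : ∀ k, II (ψ k ^ 2) = ∑ jj : S k, (eval x (q k jj))^2 := by
      intro k
      rw [hψsum k, II_quad]
      calc ∑ α : S k, ∑ β : S k, (eval x (monomial α.1 1) * eval x (monomial β.1 1))
              * II (coeffAt α.1 (ρ k) * coeffAt β.1 (ρ k))
          = ∑ α : S k, ∑ β : S k, ∑ jj : S k, (B k jj α * eval x (monomial α.1 1))
              * (B k jj β * eval x (monomial β.1 1)) := by
            refine Finset.sum_congr rfl fun α _ => Finset.sum_congr rfl fun β _ => ?_
            rw [show II (coeffAt α.1 (ρ k) * coeffAt β.1 (ρ k)) = M k α β from rfl, hMB k α β,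
              Finset.mul_sum]
            exact Finset.sum_congr rfl fun jj _ => by ring
        _ = ∑ jj : S k, ∑ α : S k, ∑ β : S k, (B k jj α * eval x (monomial α.1 1))
              * (B k jj β * eval x (monomial β.1 1)) := by
            rw [Finset.sum_congr rfl fun α (_ : α ∈ Finset.univ) => Finset.sum_comm]
            exact Finset.sum_comm
        _ = ∑ jj : S k, (eval x (q k jj))^2 := by
            refine Finset.sum_congr rfl fun jj _ => ?_
            rw [hqeval k jj, sq, Finset.sum_mul_sum]
    rw [hF, hd2, II_sum, map_sum]
    refine Finset.sum_congr rfl fun k _ => ?_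
    rw [hIIψ k, map_sum]
    exact Finset.sum_congr rfl fun jj _ => by rw [map_pow]
  have hFeq : (p - C (eval a p) - ∑ i, C (eval a (pderiv i p)) * (X i - C (a i)))
      = ∑ k, ∑ jj : S k, q k jj ^ 2 := MvPolynomial.funext key
  rw [hFeq]
  exact isSOSUpTo_sum _ _ fun k _ => isSOSUpTo_sum _ _ fun jj _ => isSOSUpTo_single (hqdeg k jj)

lemma L_C_eq {L : MvPolynomial (Fin n) ℝ →ₗ[ℝ] ℝ} (hL1 : L 1 = 1) (c : ℝ) : L (C c) = c := by
  rw [show (C c : MvPolynomial (Fin n) ℝ) = c • 1 by rw [smul_eq_C_mul, mul_one],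
    _root_.map_smul, hL1, smul_eq_mul, mul_one]

lemma jensen (d : ℕ) (p : MvPolynomial (Fin n) ℝ) (hdeg2 : (p.totalDegree + 1) / 2 ≤ d)
    (hp : IsSOSConvex p) (L : MvPolynomial (Fin n) ℝ →ₗ[ℝ] ℝ) (hL1 : L 1 = 1)
    (hLsos : ∀ σ, IsSOSUpTo d σ → 0 ≤ L σ) :
    eval (fun i => L (X i)) p ≤ L p := by
  by_cases h0 : p.totalDegree = 0
  · have hpc : p = C (coeff 0 p) := by
      have h := sum_homogeneousComponent p
      rw [h0] at h
      simpa using h.symm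
    rw [hpc, eval_C, L_C_eq hL1]
  · set a : Fin n → ℝ := fun i => L (X i) with ha
    have hd1 : 1 ≤ d := by omega
    have hdeg : p.totalDegree ≤ 2 * d := by omega
    have h := hLsos _ (sosConvex_taylor_sos d hd1 p hdeg hp a)
    have h2 : ∀ i : Fin n, L (C (eval a (pderiv i p)) * (X i - C (a i))) = 0 := by
      intro i
      rw [show (C (eval a (pderiv i p)) * (X i - C (a i)) : MvPolynomial (Fin n) ℝ)
          = (eval a (pderiv i p)) • (X i - C (a i)) by rw [smul_eq_C_mul], _root_.map_smul]
      rw [map_sub, L_C_eq hL1]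
      have : L (X i) = a i := rfl
      rw [this, sub_self, smul_zero]
    rw [map_sub, map_sub, map_sum, L_C_eq hL1,
      Finset.sum_congr rfl fun i _ => h2 i, Finset.sum_const_zero, sub_zero] at h
    linarith

/-- under Slater's condition, with `f` SOS-convex attaining its infimum `f*`
on `K`, each `−gⱼ` SOS-convex and `d = max(⌈deg f/2⌉, maxⱼ ⌈deg gⱼ/2⌉)`, every linear
functional `L` with `L(1)=1`, nonnegative on SOS polynomials of degree at most `2d`, and
`L(gⱼ) ≥ 0` gives a point `x* := (L(X₁),…,L(Xₙ)) ∈ K` with `f* ≤ f(x*) ≤ L(f)`;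
consequently the infimum of `L(f)` over all such `L` equals `f*`. -/
theorem stmt_10 (n m : ℕ) (g : Fin m → MvPolynomial (Fin n) ℝ)
    (K : Set (Fin n → ℝ)) (hK : K = {x | ∀ j, 0 ≤ eval x (g j)})
    (slater : ∃ x₀ : Fin n → ℝ, ∀ j, 0 < eval x₀ (g j))
    (f : MvPolynomial (Fin n) ℝ) (hf : IsSOSConvex f)
    (hg : ∀ j, IsSOSConvex (-(g j)))
    (fstar : ℝ) (xstar : Fin n → ℝ) (hxK : xstar ∈ K)
    (hfx : eval xstar f = fstar) (hmin : ∀ x ∈ K, fstar ≤ eval x f)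
    (d : ℕ)
    (hd : d = max ((f.totalDegree + 1) / 2)
      (Finset.univ.sup fun j => ((g j).totalDegree + 1) / 2)) :
    (∀ L : MvPolynomial (Fin n) ℝ →ₗ[ℝ] ℝ,
      L 1 = 1 → (∀ σ, IsSOSUpTo d σ → 0 ≤ L σ) → (∀ j, 0 ≤ L (g j)) →
        (fun i => L (X i)) ∈ K ∧ fstar ≤ eval (fun i => L (X i)) f ∧
          eval (fun i => L (X i)) f ≤ L f) ∧
    IsGLB {r : ℝ | ∃ L : MvPolynomial (Fin n) ℝ →ₗ[ℝ] ℝ,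
      L 1 = 1 ∧ (∀ σ, IsSOSUpTo d σ → 0 ≤ L σ) ∧ (∀ j, 0 ≤ L (g j)) ∧ r = L f} fstar := by
  have hdf : (f.totalDegree + 1) / 2 ≤ d := hd ▸ le_max_left _ _
  have hdg : ∀ j, ((-(g j)).totalDegree + 1) / 2 ≤ d := by
    intro j
    rw [totalDegree_neg, hd]
    exact le_trans (Finset.le_sup (f := fun j => ((g j).totalDegree + 1) / 2)
      (Finset.mem_univ j)) (le_max_right _ _)
  have main : ∀ L : MvPolynomial (Fin n) ℝ →ₗ[ℝ] ℝ,
      L 1 = 1 → (∀ σ, IsSOSUpTo d σ → 0 ≤ L σ) → (∀ j, 0 ≤ L (g j)) →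
        (fun i => L (X i)) ∈ K ∧ fstar ≤ eval (fun i => L (X i)) f ∧
          eval (fun i => L (X i)) f ≤ L f := by
    intro L hL1 hLsos hLg
    have hmem : (fun i => L (X i)) ∈ K := by
      rw [hK]
      intro j
      have hj := jensen d (-(g j)) (hdg j) (hg j) L hL1 hLsos
      rw [map_neg, map_neg] at hj
      have := hLg j
      linarith
    refine ⟨hmem, hmin _ hmem, jensen d f hdf hf L hL1 hLsos⟩
  refine ⟨main, ?_, ?_⟩
  · rintro r ⟨L, hL1, hLsos, hLg, rfl⟩
    obtain ⟨hmem, h1, h2⟩ := main L hL1 hLsos hLg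
    linarith
  · intro b hb
    refine hb ⟨(MvPolynomial.aeval xstar).toLinearMap, ?_, ?_, ?_, ?_⟩
    · simp
    · rintro σ ⟨k, q, hq, rfl⟩
      simp only [AlgHom.toLinearMap_apply, map_sum, map_pow]
      exact Finset.sum_nonneg fun i _ => by positivity
    · intro j
      have : (MvPolynomial.aeval xstar) (g j) = eval xstar (g j) := by
        rfl
      rw [AlgHom.toLinearMap_apply, this]
      rw [hK] at hxK
      exact hxK j
    · have : (MvPolynomial.aeval xstar) f = eval xstar f := by
        rfl
      rw [AlgHom.toLinearMap_apply, this, hfx]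
end

section
/- Let g₁,…,gₘ ∈ ℝ[X₁,…,Xₙ], K := {x ∈ ℝⁿ : gⱼ(x) ≥ 0, j = 1,…,m} be compact with each gⱼ concave, and assume Slater's condition holds. Set d := maxⱼ ⌈deg gⱼ/2⌉. Suppose that for every polynomial f of degree at most 1 there exist λ ∈ ℝ₊ᵐ such that the Lagrangian f − f* − Σⱼ λⱼ gⱼ is an SOS polynomial, where f* := min{f(x) : x ∈ K}. Then K = {x ∈ ℝⁿ : there exists a linear functional L on the polynomials of degree at most 2d with L(1) = 1, L(Xᵢ) = xᵢ for i = 1,…,n, L(σ) ≥ 0 for every SOS polynomial σ of degree at most 2d, and L(gⱼ) ≥ 0 for all j}. -/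
open MvPolynomial

lemma hc_monomial {n : ℕ} (k : ℕ) (s : Fin n →₀ ℕ) (c : ℝ) :
    homogeneousComponent k (monomial s c) =
      if s.degree = k then monomial s c else 0 := by
  ext d
  rw [coeff_homogeneousComponent]
  by_cases hds : d = s
  · subst hds; split_ifs <;> simp_all
  · have : coeff d (monomial s c) = 0 := by
      rw [coeff_monomial, if_neg (fun h => hds h.symm)]
    split_ifs <;> simp [this]

lemma coeff_aeval_line {n : ℕ} (x : Fin n → ℝ) (p : MvPolynomial (Fin n) ℝ) (k : ℕ) :
    (aeval (fun i => Polynomial.C (x i) * Polynomial.X) p).coeff k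
      = eval x (homogeneousComponent k p) := by
  induction p using MvPolynomial.induction_on' with
  | monomial s c =>
    rw [aeval_monomial]
    have h1 : (s.prod fun i e => (Polynomial.C (x i) * Polynomial.X) ^ e)
        = Polynomial.C (s.prod fun i e => x i ^ e) * Polynomial.X ^ s.degree := by
      rw [Finsupp.prod, Finsupp.prod, Finsupp.degree_apply, ← Finset.prod_pow_eq_pow_sum,
        map_prod, ← Finset.prod_mul_distrib]
      exact Finset.prod_congr rfl fun i _ => by rw [mul_pow, Polynomial.C_pow]
    rw [h1, Polynomial.algebraMap_eq, ← mul_assoc, ← map_mul, Polynomial.coeff_C_mul_X_pow,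
      hc_monomial]
    by_cases h : s.degree = k <;> simp [h, eval_monomial, eq_comm (a := k), Finsupp.prod]
  | add p q hp hq => simp [map_add, hp, hq]

lemma sos_degree {n k : ℕ} (q : Fin k → MvPolynomial (Fin n) ℝ) (i : Fin k) :
    2 * (q i).totalDegree ≤ (∑ j, q j ^ 2).totalDegree := by
  by_cases hqi : q i = 0
  · simp [hqi]
  classical
  set S : Finset (Fin k) := Finset.univ.filter (fun j => q j ≠ 0) with hS
  have hiS : i ∈ S := by simp [hS, hqi]
  set D : ℕ := S.sup (fun j => (q j).totalDegree) with hD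
  have hiD : (q i).totalDegree ≤ D := Finset.le_sup (f := fun j => (q j).totalDegree) hiS
  obtain ⟨i₀, hi₀S, hi₀⟩ := Finset.exists_mem_eq_sup S ⟨i, hiS⟩ (fun j => (q j).totalDegree)
  have hDi₀ : D = (q i₀).totalDegree := hD.trans hi₀
  have hqi₀ : q i₀ ≠ 0 := by simpa [hS] using hi₀S
  have hdegle : ∀ j, (q j).totalDegree ≤ D := by
    intro j
    rcases eq_or_ne (q j) 0 with h | h
    · simp [h]
    · exact Finset.le_sup (f := fun j => (q j).totalDegree) (by simp [hS, h])
  -- the top homogeneous component of q i₀ is nonzero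
  have hhc : homogeneousComponent D (q i₀) ≠ 0 := by
    obtain ⟨s, hs, hsd⟩ := Finset.exists_mem_eq_sup (q i₀).support
      (by simpa using hqi₀) (fun s => s.sum fun _ e => e)
    have hcs : coeff s (homogeneousComponent D (q i₀)) = coeff s (q i₀) := by
      rw [coeff_homogeneousComponent, if_pos]
      rw [hDi₀, MvPolynomial.totalDegree, hsd]; rfl
    intro h
    rw [h] at hcs
    exact (MvPolynomial.mem_support_iff.mp hs) (by simpa using hcs.symm)
  obtain ⟨x, hx⟩ : ∃ x : Fin n → ℝ, eval x (homogeneousComponent D (q i₀)) ≠ 0 := by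
    by_contra h
    push_neg at h
    exact hhc (MvPolynomial.funext (q := 0) (by simpa using h))
  have hdegφ : ∀ j,
      ((aeval fun i => Polynomial.C (x i) * Polynomial.X) (q j)).natDegree ≤ D := by
    intro j
    rw [Polynomial.natDegree_le_iff_coeff_eq_zero]
    intro N hN
    rw [coeff_aeval_line, homogeneousComponent_eq_zero, map_zero]
    exact lt_of_le_of_lt (hdegle j) hN
  have hRHS : eval x (homogeneousComponent (2 * D) (∑ j, q j ^ 2))
      = ∑ j, (eval x (homogeneousComponent D (q j)))^2 := by
    rw [← coeff_aeval_line, map_sum, Polynomial.finset_sum_coeff]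
    refine Finset.sum_congr rfl fun j _ => ?_
    rw [map_pow, sq, two_mul,
      Polynomial.coeff_mul_add_eq_of_natDegree_le (hdegφ j) (hdegφ j), ← sq, coeff_aeval_line]
  have key : (eval x (homogeneousComponent D (q i₀)))^2
      ≤ eval x (homogeneousComponent (2 * D) (∑ j, q j ^ 2)) := by
    rw [hRHS]
    exact Finset.single_le_sum (f := fun j => (eval x (homogeneousComponent D (q j)))^2)
      (fun j _ => sq_nonneg _) (Finset.mem_univ i₀)
  have h2D : 2 * D ≤ (∑ j, q j ^ 2).totalDegree := by
    by_contra h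
    push_neg at h
    rw [homogeneousComponent_eq_zero _ _ h, map_zero] at key
    exact hx (pow_eq_zero_iff (by norm_num) |>.mp (le_antisymm key (sq_nonneg _)))
  calc 2 * (q i).totalDegree ≤ 2 * D := by omega
    _ ≤ _ := h2D

/-- if `K` is compact with concave defining polynomials `gⱼ`, Slater's
condition holds, `d = maxⱼ ⌈deg gⱼ/2⌉`, and for every polynomial `f` of degree at most 1
the Lagrangian `f − f* − Σⱼ λⱼ gⱼ` is SOS for some `λ ≥ 0` (with `f* := min_K f`), then
`K` equals the projection of the moment-based semidefinite set. -/
theorem stmt_12 (n m : ℕ) (g : Fin m → MvPolynomial (Fin n) ℝ)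
    (K : Set (Fin n → ℝ)) (hK : K = {x | ∀ j, 0 ≤ eval x (g j)})
    (hcompact : IsCompact K)
    (hconc : ∀ j, ConcaveOn ℝ Set.univ fun x => eval x (g j))
    (slater : ∃ x₀ : Fin n → ℝ, ∀ j, 0 < eval x₀ (g j))
    (d : ℕ) (hd : d = Finset.univ.sup fun j => ((g j).totalDegree + 1) / 2)
    (hlag : ∀ f : MvPolynomial (Fin n) ℝ, f.totalDegree ≤ 1 →
      ∃ lam : Fin m → ℝ, (∀ j, 0 ≤ lam j) ∧
        IsSOS (f - C (sInf ((fun x => eval x f) '' K)) - ∑ j, C (lam j) * g j)) :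
    K = {x | ∃ L : MvPolynomial (Fin n) ℝ →ₗ[ℝ] ℝ,
      L 1 = 1 ∧ (∀ i, L (X i) = x i) ∧
      (∀ σ, IsSOSUpTo d σ → 0 ≤ L σ) ∧ (∀ j, 0 ≤ L (g j))} := by
  obtain ⟨x₀, hx₀⟩ := slater
  have hx₀K : x₀ ∈ K := by rw [hK]; exact fun j => (hx₀ j).le
  ext x
  simp only [Set.mem_setOf_eq]
  constructor
  · intro hxK
    have hx : ∀ j, 0 ≤ eval x (g j) := by rwa [hK] at hxK
    refine ⟨(aeval x : MvPolynomial (Fin n) ℝ →ₐ[ℝ] ℝ).toLinearMap, by simp, fun i => by simp,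
      ?_, ?_⟩
    · rintro σ ⟨k, q, -, rfl⟩
      simp only [AlgHom.toLinearMap_apply, map_sum, map_pow]
      positivity
    · intro j
      have haev : (aeval x : MvPolynomial (Fin n) ℝ →ₐ[ℝ] ℝ) (g j) = eval x (g j) :=
        RingHom.congr_fun (MvPolynomial.coe_aeval_eq_eval x) (g j)
      simpa [haev] using hx j
  · rintro ⟨L, hL1, hLX, hLsos, hLg⟩
    by_contra hxK
    -- K is convex and closed
    have hKconv : Convex ℝ K := by
      have : K = ⋂ j, {y | 0 ≤ eval y (g j)} := by rw [hK]; ext y; simp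
      rw [this]
      refine convex_iInter fun j => ?_
      have := (hconc j).convex_ge 0
      simpa using this
    have hKclosed : IsClosed K := by
      have : K = ⋂ j, (fun y => eval y (g j)) ⁻¹' Set.Ici 0 := by rw [hK]; ext y; simp
      rw [this]
      exact isClosed_iInter fun j =>
        IsClosed.preimage (MvPolynomial.continuous_eval (g j)) isClosed_Ici
    obtain ⟨ℓ, u, hu1, hu2⟩ := geometric_hahn_banach_closed_point hKconv hKclosed hxK
    set f : MvPolynomial (Fin n) ℝ :=
      ∑ i, C (-(ℓ fun j => if i = j then 1 else 0)) * X i with hf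
    have hℓ : ∀ y : Fin n → ℝ,
        ℓ y = ∑ i, y i * ℓ (fun j => if i = j then 1 else 0) := by
      intro y
      rw [show ℓ y = (ℓ : (Fin n → ℝ) →ₗ[ℝ] ℝ) y from rfl,
        LinearMap.pi_apply_eq_sum_univ]
      simp [smul_eq_mul]
    have hevalf : ∀ y, eval y f = -(ℓ y) := by
      intro y
      rw [hf, map_sum, hℓ y, ← Finset.sum_neg_distrib]
      refine Finset.sum_congr rfl fun i _ => ?_
      simp [mul_comm]
    have hdegf : f.totalDegree ≤ 1 := by
      refine le_trans (totalDegree_finset_sum _ _) (Finset.sup_le fun i _ => ?_)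
      refine le_trans (totalDegree_mul _ _) ?_
      simp
    obtain ⟨lam, hlam, k, q, hq⟩ := hlag f hdegf
    set c : ℝ := sInf ((fun y => eval y f) '' K) with hc
    -- degree bounds
    have hgdeg : ∀ j, (g j).totalDegree ≤ 2 * d := by
      intro j
      have h := hd ▸ Finset.le_sup (f := fun j => ((g j).totalDegree + 1) / 2)
        (Finset.mem_univ j)
      omega
    have hσdeg : (f - C c - ∑ j, C (lam j) * g j).totalDegree ≤ max 1 (2 * d) := by
      rw [sub_sub, sub_eq_add_neg]
      refine le_trans (totalDegree_add _ _) (max_le (le_trans hdegf (le_max_left _ _)) ?_)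
      rw [totalDegree_neg]
      refine le_trans (totalDegree_add _ _) (max_le (by simp) ?_)
      refine le_trans (totalDegree_finset_sum _ _) (Finset.sup_le fun j _ => ?_)
      refine le_trans (totalDegree_mul _ _) ?_
      simpa using le_trans (hgdeg j) (le_max_right _ _)
    have hqdeg : ∀ i, (q i).totalDegree ≤ d := by
      intro i
      have h1 := sos_degree q i
      rw [← hq] at h1
      have := le_trans h1 hσdeg
      rcases le_or_gt (2 * d) 1 with h | h
      · omega
      · omega
    have hLσ : 0 ≤ L (f - C c - ∑ j, C (lam j) * g j) := hLsos _ ⟨k, q, hqdeg, hq⟩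
    have hLC : ∀ a : ℝ, L (C a) = a := by
      intro a
      rw [MvPolynomial.C_eq_smul_one, map_smul, hL1, smul_eq_mul, mul_one]
    have hLf : L f = -(ℓ x) := by
      rw [hf, map_sum, hℓ x, ← Finset.sum_neg_distrib]
      refine Finset.sum_congr rfl fun i _ => ?_
      rw [← MvPolynomial.smul_eq_C_mul, map_smul, hLX, smul_eq_mul]
      ring
    have hLsum : L (∑ j, C (lam j) * g j) = ∑ j, lam j * L (g j) := by
      rw [map_sum]
      exact Finset.sum_congr rfl fun j _ => by
        rw [← MvPolynomial.smul_eq_C_mul, map_smul, smul_eq_mul]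
    have hLσ' : L (f - C c - ∑ j, C (lam j) * g j)
        = -(ℓ x) - c - ∑ j, lam j * L (g j) := by
      rw [map_sub, map_sub, hLf, hLC, hLsum]
    have hsum_nonneg : 0 ≤ ∑ j, lam j * L (g j) :=
      Finset.sum_nonneg fun j _ => mul_nonneg (hlam j) (hLg j)
    have hfstar : -u ≤ c := by
      refine le_csInf (Set.Nonempty.image _ ⟨x₀, hx₀K⟩) ?_
      rintro b ⟨y, hyK, rfl⟩
      have := hu1 y hyK
      show -u ≤ eval y f
      rw [hevalf]
      linarith
    rw [hLσ'] at hLσ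
    linarith
end

section
/- Let g₁,…,gₘ ∈ ℝ[X₁,…,Xₙ] and K := {x ∈ ℝⁿ : gⱼ(x) ≥ 0, j = 1,…,m}. Assume Slater's condition holds and that for every j = 1,…,m, ∇gⱼ(y) ≠ 0 whenever y ∈ K and gⱼ(y) = 0. Then K is convex if and only if for every j = 1,…,m one has ⟨∇gⱼ(y), x − y⟩ ≥ 0 for all x ∈ K and all y ∈ K with gⱼ(y) = 0. -/
open MvPolynomial

lemma hasDerivAt_eval_line {n : ℕ} (p : MvPolynomial (Fin n) ℝ)
    (y v : Fin n → ℝ) (t : ℝ) :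
    HasDerivAt (fun s : ℝ => eval (fun i => y i + s * v i) p)
      (∑ i, eval (fun i => y i + t * v i) (pderiv i p) * v i) t := by
  induction p using MvPolynomial.induction_on with
  | C a => simpa using hasDerivAt_const t a
  | add p q hp hq =>
      have h : HasDerivAt (fun s : ℝ => eval (fun i => y i + s * v i) p + eval (fun i => y i + s * v i) q) _ t := hp.add hq
      simpa [map_add, add_mul, Finset.sum_add_distrib] using h
  | mul_X p i hp =>
      have hX : HasDerivAt (fun s : ℝ => y i + s * v i) (v i) t := by
        simpa using ((hasDerivAt_id t).mul_const (v i)).const_add (y i)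
      have h : HasDerivAt (fun s : ℝ => eval (fun i => y i + s * v i) p * (y i + s * v i)) _ t := hp.mul hX
      convert h using 1 with s
      · simp
      · classical
        calc ∑ i', eval (fun i => y i + t * v i) (pderiv i' (p * X i)) * v i'
            = ∑ i', ((eval (fun i => y i + t * v i) (pderiv i' p) * v i') * (y i + t * v i)
                + eval (fun i => y i + t * v i) p * (if i = i' then v i' else 0)) := by
              refine Finset.sum_congr rfl (fun i' _ => ?_)
              simp only [pderiv_mul, map_add, map_mul, eval_X, pderiv_X, Pi.single_apply]
              split <;> simp <;> ring
          _ = _ := by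
              rw [Finset.sum_add_distrib, ← Finset.sum_mul, ← Finset.mul_sum,
                Finset.sum_ite_eq]
              simp

/-- under Slater's condition and nondegeneracy of the gradients on the
boundary, `K = {x : gⱼ(x) ≥ 0 ∀j}` is convex if and only if for every `j`,
`⟨∇gⱼ(y), x − y⟩ ≥ 0` for all `x ∈ K` and all `y ∈ K` with `gⱼ(y) = 0`. -/
theorem stmt_13 (n m : ℕ) (g : Fin m → MvPolynomial (Fin n) ℝ)
    (K : Set (Fin n → ℝ)) (hK : K = {x | ∀ j, 0 ≤ eval x (g j)})
    (slater : ∃ x₀ : Fin n → ℝ, ∀ j, 0 < eval x₀ (g j))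
    (hnd : ∀ j : Fin m, ∀ y ∈ K, eval y (g j) = 0 →
      (fun i => eval y (pderiv i (g j))) ≠ (0 : Fin n → ℝ)) :
    Convex ℝ K ↔ ∀ j : Fin m, ∀ x ∈ K, ∀ y ∈ K, eval y (g j) = 0 →
      0 ≤ ∑ i, eval y (pderiv i (g j)) * (x i - y i) := by
  subst hK
  obtain ⟨x₀, hx₀⟩ := slater
  have hx₀K : x₀ ∈ {x | ∀ j, 0 ≤ eval x (g j)} := fun j => (hx₀ j).le
  constructor
  · -- convex → cond
    intro hcv j x hx y hy hgy
    have hpt0 : (fun i => y i + (0:ℝ) * (x i - y i)) = y := funext fun i => by ring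
    have hd := hasDerivAt_eval_line (g j) y (fun i => x i - y i) 0
    have hd' := hd.hasDerivWithinAt (s := Set.Ioi (0:ℝ))
    rw [hasDerivWithinAt_iff_tendsto_slope,
      Set.diff_singleton_eq_self (by simp)] at hd'
    rw [hpt0] at hd'
    refine ge_of_tendsto hd' ?_
    filter_upwards [Ioc_mem_nhdsGT_of_mem ⟨le_refl (0:ℝ), zero_lt_one⟩] with t ht
    have hin : (fun i => y i + t * (x i - y i)) ∈ {x | ∀ j, 0 ≤ eval x (g j)} := by
      have := hcv hy hx (a := 1 - t) (b := t) (by linarith [ht.2]) ht.1.le (by ring)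
      convert this using 2
      simp only [Pi.add_apply, Pi.smul_apply, smul_eq_mul]
      ring
    have hφt : 0 ≤ eval (fun i => y i + t * (x i - y i)) (g j) := hin j
    have hslope : slope (fun s : ℝ => eval (fun i => y i + s * (x i - y i)) (g j)) 0 t
        = eval (fun i => y i + t * (x i - y i)) (g j) / t := by
      rw [slope_def_field, hpt0, hgy]
      ring
    rw [hslope]
    exact div_nonneg hφt ht.1.le
  · -- cond → convex
    intro cond
    -- strict Slater inequality
    have key : ∀ j : Fin m, ∀ y ∈ {x | ∀ j, 0 ≤ eval x (g j)}, eval y (g j) = 0 →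
        0 < ∑ i, eval y (pderiv i (g j)) * (x₀ i - y i) := by
      intro j y hy hgy
      set w : Fin n → ℝ := fun i => eval y (pderiv i (g j)) with hw
      have hwne : w ≠ 0 := hnd j y hy hgy
      obtain ⟨i₀, hi₀⟩ : ∃ i, w i ≠ 0 := by
        by_contra h; push_neg at h; exact hwne (funext h)
      have hsq : 0 < ∑ i, w i * w i :=
        Finset.sum_pos' (fun i _ => mul_self_nonneg _)
          ⟨i₀, Finset.mem_univ _, mul_self_pos.mpr hi₀⟩
      -- find δ > 0 with x₀ - δ w ∈ K
      have hcont : ∀ k : Fin m, Continuous fun δ : ℝ =>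
          eval (fun i => x₀ i - δ * w i) (g k) := by
        intro k
        exact (MvPolynomial.continuous_eval _).comp
          (continuous_pi fun i => by fun_prop)
      have hev : ∀ᶠ δ in nhds (0:ℝ), ∀ k, 0 < eval (fun i => x₀ i - δ * w i) (g k) := by
        rw [Filter.eventually_all]
        intro k
        have : (fun i => x₀ i - (0:ℝ) * w i) = x₀ := by funext i; ring
        have h0 : (0:ℝ) < eval (fun i => x₀ i - (0:ℝ) * w i) (g k) := by
          rw [this]; exact hx₀ k
        exact (hcont k).continuousAt.eventually_const_lt h0
      have hev' : ∀ᶠ δ in nhdsWithin (0:ℝ) (Set.Ioi 0), (0:ℝ) < δ ∧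
          ∀ k, 0 < eval (fun i => x₀ i - δ * w i) (g k) := by
        filter_upwards [self_mem_nhdsWithin, hev.filter_mono nhdsWithin_le_nhds] with δ h1 h2
        exact ⟨h1, h2⟩
      obtain ⟨δ, hδpos, hδ⟩ := hev'.exists
      have hxδ : (fun i => x₀ i - δ * w i) ∈ {x | ∀ j, 0 ≤ eval x (g j)} :=
        fun k => (hδ k).le
      have h1 := cond j _ hxδ y hy hgy
      have h2 : ∑ i, w i * ((x₀ i - δ * w i) - y i)
          = ∑ i, w i * (x₀ i - y i) - δ * ∑ i, w i * w i := by
        rw [Finset.mul_sum, ← Finset.sum_sub_distrib]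
        exact Finset.sum_congr rfl (fun i _ => by ring)
      rw [h2] at h1
      nlinarith
    -- convexity
    intro x hx y hy a b ha hb hab
    by_contra hz
    set z : Fin n → ℝ := a • x + b • y with hzdef
    have hzi : ∀ i, z i = a * x i + b * y i := fun i => rfl
    set φ : Fin m → ℝ → ℝ := fun k t => eval (fun i => x₀ i + t * (z i - x₀ i)) (g k) with hφ
    have hφcont : ∀ k, Continuous (φ k) := by
      intro k
      exact (MvPolynomial.continuous_eval _).comp (continuous_pi fun i => by fun_prop)
    have hφ0 : ∀ k, 0 < φ k 0 := by
      intro k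
      have : (fun i => x₀ i + (0:ℝ) * (z i - x₀ i)) = x₀ := by funext i; ring
      rw [hφ]; simpa [this] using hx₀ k
    have hφ1 : ∃ k, φ k 1 < 0 := by
      have : (fun i => x₀ i + (1:ℝ) * (z i - x₀ i)) = z := by funext i; ring
      simp only [hφ, this]
      by_contra h; push_neg at h; exact hz (fun k => h k)
    set B : Set ℝ := {t ∈ Set.Icc (0:ℝ) 1 | ∃ k, φ k t ≤ 0} with hB
    have hBclosed : IsClosed B := by
      have : B = Set.Icc (0:ℝ) 1 ∩ ⋃ k, {t | φ k t ≤ 0} := by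
        ext t; simp [hB, Set.mem_setOf_eq, and_comm]
      rw [this]
      exact isClosed_Icc.inter (isClosed_iUnion_of_finite fun k =>
        isClosed_le (hφcont k) continuous_const)
    have hBne : B.Nonempty := by
      obtain ⟨k, hk⟩ := hφ1
      exact ⟨1, ⟨⟨zero_le_one, le_refl _⟩, k, hk.le⟩⟩
    have hBbdd : BddBelow B := ⟨0, fun t ht => ht.1.1⟩
    set T : ℝ := sInf B with hT
    have hTB : T ∈ B := hBclosed.csInf_mem hBne hBbdd
    have hT0 : 0 < T := by
      rcases hTB.2 with ⟨k, hk⟩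
      rcases lt_or_eq_of_le hTB.1.1 with h | h
      · exact h
      · exact absurd hk (by rw [← h]; exact (hφ0 k).not_ge)
    have hbefore : ∀ s, 0 ≤ s → s < T → ∀ k, 0 < φ k s := by
      intro s hs0 hsT k
      by_contra h
      push_neg at h
      have hsB : s ∈ B := ⟨⟨hs0, hsT.le.trans hTB.1.2⟩, k, h⟩
      exact absurd (csInf_le hBbdd hsB) (not_le.mpr hsT)
    -- φ k T ≥ 0 for all k, by left continuity
    have hTge : ∀ k, 0 ≤ φ k T := by
      intro k
      have htend : Filter.Tendsto (φ k) (nhdsWithin T (Set.Iio T)) (nhds (φ k T)) :=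
        ((hφcont k).tendsto T).mono_left nhdsWithin_le_nhds
      refine ge_of_tendsto htend ?_
      have hmem : Set.Ico (0:ℝ) T ∈ nhdsWithin T (Set.Iio T) := by
        have h1 : Set.Ici (0:ℝ) ∈ nhdsWithin T (Set.Iio T) :=
          mem_nhdsWithin_of_mem_nhds (Ici_mem_nhds hT0)
        exact Filter.mem_of_superset (Filter.inter_mem h1 self_mem_nhdsWithin)
          (fun s hs => ⟨hs.1, hs.2⟩)
      filter_upwards [hmem] with s hs
      exact (hbefore s hs.1 hs.2 k).le
    set Y : Fin n → ℝ := fun i => x₀ i + T * (z i - x₀ i) with hY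
    have hYK : Y ∈ {x | ∀ j, 0 ≤ eval x (g j)} := fun k => hTge k
    obtain ⟨j, hj⟩ := hTB.2
    have hgY : eval Y (g j) = 0 := le_antisymm hj (hTge j)
    have hT1 : T < 1 := by
      rcases lt_or_eq_of_le hTB.1.2 with h | h
      · exact h
      · exfalso
        apply hz
        intro k
        have : Y = z := by funext i; simp only [hY]; rw [h]; ring
        rw [← this]
        exact hYK k
    set w : Fin n → ℝ := fun i => eval Y (pderiv i (g j)) with hw
    set S : ℝ := ∑ i, w i * (z i - x₀ i) with hS
    have hkey := key j Y hYK hgY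
    have h1 : ∑ i, w i * (x₀ i - Y i) = -T * S := by
      rw [hS, Finset.mul_sum]
      exact Finset.sum_congr rfl (fun i _ => by rw [hY]; ring)
    rw [h1] at hkey
    have hSneg : S < 0 := by nlinarith
    have hA1 := cond j x hx Y hYK hgY
    have hA2 := cond j y hy Y hYK hgY
    have hcomb : 0 ≤ ∑ i, w i * (z i - Y i) := by
      have : ∑ i, w i * (z i - Y i)
          = a * (∑ i, w i * (x i - Y i)) + b * (∑ i, w i * (y i - Y i)) := by
        rw [Finset.mul_sum, Finset.mul_sum, ← Finset.sum_add_distrib]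
        refine Finset.sum_congr rfl (fun i _ => ?_)
        rw [hzi i]
        linear_combination (w i * Y i) * hab
      rw [this]
      have := add_le_add (mul_le_mul_of_nonneg_left hA1 ha)
        (mul_le_mul_of_nonneg_left hA2 hb)
      simpa using this
    have h2 : ∑ i, w i * (z i - Y i) = (1 - T) * S := by
      rw [hS, Finset.mul_sum]
      exact Finset.sum_congr rfl (fun i _ => by rw [hY]; ring)
    rw [h2] at hcomb
    nlinarith
end

section
/- Let g₁,…,gₘ ∈ ℝ[X₁,…,Xₙ] and K := {x ∈ ℝⁿ : gⱼ(x) ≥ 0, j = 1,…,m}. Assume Slater's condition holds, that for every j, ∇gⱼ(y) ≠ 0 whenever y ∈ K and gⱼ(y) = 0, and that for every j one has ⟨∇gⱼ(y), x − y⟩ ≥ 0 for all x ∈ K and all y ∈ K with gⱼ(y) = 0. Then for every x* ∈ K and every nonzero λ ∈ ℝ₊ᵐ with λⱼ·gⱼ(x*) = 0 for all j, one has Σⱼ₌₁ᵐ λⱼ·∇gⱼ(x*) ≠ 0. (Consequently, in the Fritz-John optimality conditions at a minimizer of a linear function on K, the multiplier of the objective can be taken positive, i.e., the KKT conditions hold.)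 -/
open MvPolynomial

/-- under Slater's condition, boundary nondegeneracy, and the supporting
hyperplane condition `⟨∇gⱼ(y), x − y⟩ ≥ 0` for all `x ∈ K`, `y ∈ K` with `gⱼ(y) = 0`,
for every `x* ∈ K` and every nonzero `λ ∈ ℝ₊ᵐ` with `λⱼ·gⱼ(x*) = 0` for all `j`, one has
`Σⱼ λⱼ·∇gⱼ(x*) ≠ 0` (so the Fritz-John multiplier of the objective can be taken positive,
i.e. the KKT conditions hold). -/
theorem stmt_18 (n m : ℕ) (g : Fin m → MvPolynomial (Fin n) ℝ)
    (K : Set (Fin n → ℝ)) (hK : K = {x | ∀ j, 0 ≤ eval x (g j)})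
    (slater : ∃ x₀ : Fin n → ℝ, ∀ j, 0 < eval x₀ (g j))
    (hnd : ∀ j : Fin m, ∀ y ∈ K, eval y (g j) = 0 →
      (fun i => eval y (pderiv i (g j))) ≠ (0 : Fin n → ℝ))
    (hsupp : ∀ j : Fin m, ∀ x ∈ K, ∀ y ∈ K, eval y (g j) = 0 →
      0 ≤ ∑ i, eval y (pderiv i (g j)) * (x i - y i)) :
    ∀ xstar ∈ K, ∀ lam : Fin m → ℝ, (∀ j, 0 ≤ lam j) → lam ≠ 0 →
      (∀ j, lam j * eval xstar (g j) = 0) →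
      (fun i => ∑ j, lam j * eval xstar (pderiv i (g j))) ≠ (0 : Fin n → ℝ) := by
  intro xstar hxstar lam hlam hlamne hcomp hzero
  obtain ⟨x₀, hx₀⟩ := slater
  have hx₀K : x₀ ∈ K := by rw [hK]; exact fun j => (hx₀ j).le
  -- strict positivity for active constraints
  have hstrict : ∀ j : Fin m, eval xstar (g j) = 0 →
      0 < ∑ i, eval xstar (pderiv i (g j)) * (x₀ i - xstar i) := by
    intro j hj
    rcases lt_or_eq_of_le (hsupp j x₀ hx₀K xstar hxstar hj) with h | h
    · exact h
    exfalso
    set v : Fin n → ℝ := fun i => eval xstar (pderiv i (g j)) with hv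
    have hvne : v ≠ 0 := hnd j xstar hxstar hj
    have hvv : 0 < ∑ i, v i * v i := by
      rcases Function.ne_iff.mp hvne with ⟨i₀, hi₀⟩
      have hi₀' : v i₀ ≠ 0 := by simpa using hi₀
      exact Finset.sum_pos' (fun i _ => mul_self_nonneg (v i))
        ⟨i₀, Finset.mem_univ i₀, mul_self_pos.mpr hi₀'⟩
    -- for small s > 0, x₀ - s • v ∈ K
    have hcont : ∀ k : Fin m, ∀ᶠ s : ℝ in nhds 0,
        0 < eval (fun i => x₀ i - s * v i) (g k) := by
      intro k
      have hc1 : Continuous fun s : ℝ => (fun i => x₀ i - s * v i : Fin n → ℝ) :=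
        continuous_pi fun i => continuous_const.sub (continuous_id.mul continuous_const)
      have hc : Continuous fun s : ℝ => eval (fun i => x₀ i - s * v i) (g k) :=
        (MvPolynomial.continuous_eval (g k)).comp hc1
      have h0 : (0:ℝ) < eval (fun i => x₀ i - 0 * v i) (g k) := by
        simpa using hx₀ k
      exact (hc.tendsto 0).eventually (eventually_gt_nhds (by simpa using h0))
    have hall : ∀ᶠ s : ℝ in nhds 0, ∀ k : Fin m,
        0 < eval (fun i => x₀ i - s * v i) (g k) := by
      exact Filter.eventually_all.mpr hcont
    obtain ⟨ε, hε, hball⟩ := Metric.eventually_nhds_iff.mp hall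
    set s : ℝ := ε / 2 with hs
    have hsmem : dist s (0:ℝ) < ε := by
      simp only [Real.dist_eq, sub_zero, hs]
      rw [abs_of_pos (by positivity)]; linarith
    have hxK : (fun i => x₀ i - s * v i) ∈ K := by
      rw [hK]; exact fun k => (hball hsmem k).le
    have := hsupp j _ hxK xstar hxstar hj
    have hrw : ∑ i, eval xstar (pderiv i (g j)) * ((x₀ i - s * v i) - xstar i)
        = (∑ i, v i * (x₀ i - xstar i)) - s * ∑ i, v i * v i := by
      rw [Finset.mul_sum, ← Finset.sum_sub_distrib]
      refine Finset.sum_congr rfl fun i _ => by ring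
    rw [hrw, ← h] at this
    nlinarith
  -- the contradiction
  have key : (0:ℝ) < ∑ j, lam j * ∑ i, eval xstar (pderiv i (g j)) * (x₀ i - xstar i) := by
    rcases Function.ne_iff.mp hlamne with ⟨j₀, hj₀⟩
    have hj₀pos : 0 < lam j₀ := lt_of_le_of_ne (hlam j₀) (by simpa [eq_comm] using hj₀)
    have hg0 : eval xstar (g j₀) = 0 := by
      have := hcomp j₀
      rcases mul_eq_zero.mp this with h | h
      · exact absurd h hj₀pos.ne'
      · exact h
    refine Finset.sum_pos' (fun j _ => ?_) ⟨j₀, Finset.mem_univ j₀, ?_⟩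
    · rcases eq_or_lt_of_le (hlam j) with h | h
      · simp [← h]
      · have hg0j : eval xstar (g j) = 0 := by
          rcases mul_eq_zero.mp (hcomp j) with h' | h'
          · exact absurd h' h.ne'
          · exact h'
        exact le_of_lt (mul_pos h (hstrict j hg0j))
    · exact mul_pos hj₀pos (hstrict j₀ hg0)
  have : (∑ j, lam j * ∑ i, eval xstar (pderiv i (g j)) * (x₀ i - xstar i)) = 0 := by
    have hswap : ∑ j, lam j * ∑ i, eval xstar (pderiv i (g j)) * (x₀ i - xstar i)
        = ∑ i, (∑ j, lam j * eval xstar (pderiv i (g j))) * (x₀ i - xstar i) := by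
      simp_rw [Finset.mul_sum, Finset.sum_mul]
      rw [Finset.sum_comm]
      exact Finset.sum_congr rfl fun i _ => Finset.sum_congr rfl fun j _ => by ring
    rw [hswap]
    refine Finset.sum_eq_zero fun i _ => ?_
    have : (∑ j, lam j * eval xstar (pderiv i (g j))) = 0 := congrFun hzero i
    rw [this, zero_mul]
  linarith
end
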